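/- Let n ≥ 5 and let 𝒞 be a maximal collection of pairwise weakly separated 3-element subsets of {1,…,n}. Then 𝒞 contains an almost boundary 3-subset, i.e. a 3-subset of diameter 4. Equivalently, there exists an element g of the dihedral group D_n acting on {1,…,n} such that g·𝒞 contains {1, n−2, n−1}. -/

import Mathlib

/-- `X ≺ Y`: every element of `X` is less than every element of `Y`. -/
def Prec (X Y : Finset ℕ) : Prop := ∀ x ∈ X, ∀ y ∈ Y, x < y

/-- Two finite subsets `I, J` of `{1,…,n}` are weakly separated: either
`|I| ≥ |J|` and `J∖I` is partitioned as `J₁ ⊔ J₂` with `J₁ ≺ I∖J ≺ J₂`, or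
symmetrically with `I` and `J` interchanged. -/
def WeaklySeparated (I J : Finset ℕ) : Prop :=
  (J.card ≤ I.card ∧ ∃ J₁ J₂ : Finset ℕ, Disjoint J₁ J₂ ∧ J₁ ∪ J₂ = J \ I ∧
      Prec J₁ (I \ J) ∧ Prec (I \ J) J₂) ∨
  (I.card ≤ J.card ∧ ∃ I₁ I₂ : Finset ℕ, Disjoint I₁ I₂ ∧ I₁ ∪ I₂ = I \ J ∧
      Prec I₁ (J \ I) ∧ Prec (J \ I) I₂)

/-- `I` is a `k`-element subset of `{1,…,n}`. -/
def IsKSubset (n k : ℕ) (I : Finset ℕ) : Prop := I ⊆ Finset.Icc 1 n ∧ I.card = k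

/-- `𝒞` is a maximal collection of pairwise weakly separated `k`-subsets of `{1,…,n}`:
every member is a `k`-subset of `{1,…,n}`, any two members are weakly separated, and
any `k`-subset of `{1,…,n}` weakly separated from all members already belongs to `𝒞`. -/
def MaximalWS (n k : ℕ) (𝒞 : Finset (Finset ℕ)) : Prop :=
  (∀ I ∈ 𝒞, IsKSubset n k I) ∧
  (∀ I ∈ 𝒞, ∀ J ∈ 𝒞, WeaklySeparated I J) ∧
  (∀ J, IsKSubset n k J → (∀ I ∈ 𝒞, WeaklySeparated I J) → J ∈ 𝒞)

/-- The cyclic interval of length `l` of `{1,…,n}` starting at `a`. -/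
def cycInterval (n a l : ℕ) : Finset ℕ :=
  (Finset.range l).image fun r => (a + r - 1) % n + 1

/-- The diameter of a subset `I` of `{1,…,n}`: the minimal cardinality of a cyclic
interval of `{1,…,n}` containing `I`. -/
noncomputable def cycDiameter (n : ℕ) (I : Finset ℕ) : ℕ :=
  sInf {l | ∃ a ∈ Finset.Icc 1 n, I ⊆ cycInterval n a l}

/-- `g` acts on `{1,…,n}` as an element of the dihedral group `D_n`: it is a power of
the rotation `ρ(a) = a+1 mod n`, possibly composed with the reflection `τ(a) = n+1−a`. -/
def DihedralMap (n : ℕ) (g : ℕ → ℕ) : Prop :=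
  ∃ r < n, (∀ a, g a = (a - 1 + r) % n + 1) ∨ (∀ a, g a = (n - a + r) % n + 1)
namespace AB

/-- ABAB pattern: `a < b < a' < b'` with `a, a' ∈ A`, `b, b' ∈ B`. -/
def Pat (A B : Finset ℕ) : Prop :=
  ∃ a ∈ A, ∃ b ∈ B, ∃ a' ∈ A, ∃ b' ∈ B, a < b ∧ b < a' ∧ a' < b'

def Cross (A B : Finset ℕ) : Prop := Pat A B ∨ Pat B A

lemma pat_left {A B : Finset ℕ} {a b a' b' : ℕ} (ha : a ∈ A) (hb : b ∈ B)
    (ha' : a' ∈ A) (hb' : b' ∈ B) (h1 : a < b) (h2 : b < a') (h3 : a' < b') :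
    Cross A B := Or.inl ⟨a, ha, b, hb, a', ha', b', hb', h1, h2, h3⟩

lemma pat_right {A B : Finset ℕ} {b a b' a' : ℕ} (hb : b ∈ B) (ha : a ∈ A)
    (hb' : b' ∈ B) (ha' : a' ∈ A) (h1 : b < a) (h2 : a < b') (h3 : b' < a') :
    Cross A B := Or.inr ⟨b, hb, a, ha, b', hb', a', ha', h1, h2, h3⟩

lemma cross_comm {A B : Finset ℕ} : Cross A B ↔ Cross B A := Or.comm

/-- Weak separation is equivalent to absence of a crossing pattern
(for equal cardinalities). -/
theorem ws_iff_not_cross {I J : Finset ℕ} (hIJ : I.card = J.card) :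
    WeaklySeparated I J ↔ ¬ Cross (I \ J) (J \ I) := by
  classical
  have hdisj : Disjoint (I \ J) (J \ I) := disjoint_sdiff_sdiff
  constructor
  · rintro (⟨-, J₁, J₂, hdis, hun, h₁, h₂⟩ | ⟨-, I₁, I₂, hdis, hun, h₁, h₂⟩) hc
    · rcases hc with ⟨a, ha, b, hb, a', ha', b', hb', hab, hba', ha'b'⟩ |
        ⟨b, hb, a, ha, b', hb', a', ha', hba, hab', hb'a'⟩
      · rw [← hun] at hb
        rcases Finset.mem_union.mp hb with h | h
        · exact absurd (h₁ b h a ha) (by omega)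
        · exact absurd (h₂ a' ha' b h) (by omega)
      · rw [← hun] at hb'
        rcases Finset.mem_union.mp hb' with h | h
        · exact absurd (h₁ b' h a ha) (by omega)
        · exact absurd (h₂ a' ha' b' h) (by omega)
    · rcases hc with ⟨a, ha, b, hb, a', ha', b', hb', hab, hba', ha'b'⟩ |
        ⟨b, hb, a, ha, b', hb', a', ha', hba, hab', hb'a'⟩
      · rw [← hun] at ha'
        rcases Finset.mem_union.mp ha' with h | h
        · exact absurd (h₁ a' h b hb) (by omega)
        · exact absurd (h₂ b' hb' a' h) (by omega)
      · rw [← hun] at ha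
        rcases Finset.mem_union.mp ha with h | h
        · exact absurd (h₁ a h b hb) (by omega)
        · exact absurd (h₂ b' hb' a h) (by omega)
  · intro hnc
    by_cases hins : ∃ b ∈ J \ I, ∃ a ∈ I \ J, ∃ a' ∈ I \ J, a < b ∧ b < a'
    · -- then no element of I \ J is strictly inside J \ I: build option 2
      refine Or.inr ⟨hIJ.le, (I \ J).filter (fun t => ∀ y ∈ J \ I, t < y),
        (I \ J).filter (fun t => ¬ ∀ y ∈ J \ I, t < y), ?_, ?_, ?_, ?_⟩
      · exact Finset.disjoint_filter_filter_not _ _ _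
      · exact Finset.filter_union_filter_not_eq _ _
      · intro x hx y hy
        exact (Finset.mem_filter.mp hx).2 y hy
      · intro y hy x hx
        have hx' := Finset.mem_filter.mp hx
        push_neg at hx'
        obtain ⟨y₀, hy₀, hy₀x⟩ := hx'.2
        have hxy0 : y₀ < x := by
          rcases lt_or_eq_of_le hy₀x with h | h
          · exact h
          · exact absurd hy₀ (h ▸ (Finset.disjoint_left.mp hdisj hx'.1))
        by_contra hyx
        have hyx' : x < y := by
          rcases lt_or_eq_of_le (not_lt.mp hyx) with h | h
          · exact h
          · exact absurd hy (h ▸ (Finset.disjoint_left.mp hdisj hx'.1))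
        obtain ⟨b, hb, a, ha, a', ha', hab, hba'⟩ := hins
        rcases lt_trichotomy x b with h | h | h
        · exact hnc (pat_right hy₀ hx'.1 hb ha' hxy0 h hba')
        · exact absurd hb (h ▸ (Finset.disjoint_left.mp hdisj hx'.1))
        · exact hnc (pat_left ha hb hx'.1 hy hab h hyx')
    · refine Or.inl ⟨hIJ.ge, (J \ I).filter (fun t => ∀ y ∈ I \ J, t < y),
        (J \ I).filter (fun t => ¬ ∀ y ∈ I \ J, t < y), ?_, ?_, ?_, ?_⟩
      · exact Finset.disjoint_filter_filter_not _ _ _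
      · exact Finset.filter_union_filter_not_eq _ _
      · intro x hx y hy
        exact (Finset.mem_filter.mp hx).2 y hy
      · intro y hy x hx
        have hx' := Finset.mem_filter.mp hx
        push_neg at hx'
        obtain ⟨y₀, hy₀, hy₀x⟩ := hx'.2
        have hxy0 : y₀ < x := by
          rcases lt_or_eq_of_le hy₀x with h | h
          · exact h
          · exact absurd hy₀ (h ▸ (Finset.disjoint_right.mp hdisj hx'.1))
        by_contra hyx
        have hyx' : x < y := by
          rcases lt_or_eq_of_le (not_lt.mp hyx) with h | h
          · exact h
          · exact absurd hy (h ▸ (Finset.disjoint_right.mp hdisj hx'.1))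
        exact hins ⟨x, hx'.1, y₀, hy₀, y, hy, hxy0, hyx'⟩

end AB
namespace AB

lemma mod_reduce {X n : ℕ} (hn : 0 < n) (h2 : X < 2 * n) :
    X % n = if X < n then X else X - n := by
  split_ifs with h
  · exact Nat.mod_eq_of_lt h
  · rw [Nat.mod_eq_sub_mod (by omega)]
    exact Nat.mod_eq_of_lt (by omega)

lemma mem_cycInterval {n a l x : ℕ} (ha : 1 ≤ a) (han : a ≤ n)
    (hx : 1 ≤ x) (hxn : x ≤ n) (hl : l ≤ n) :
    x ∈ cycInterval n a l ↔ (x + n - a) % n < l := by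
  have hn : 0 < n := by omega
  constructor
  · intro hmem
    obtain ⟨r, hr, hxr⟩ := Finset.mem_image.mp hmem
    rw [Finset.mem_range] at hr
    set s := (a + r - 1) % n with hs
    have hslt : s < n := Nat.mod_lt _ hn
    have h1 : x + n - a = s + (n + 1 - a) := by omega
    have h2 : (s + (n + 1 - a)) % n = ((a + r - 1) + (n + 1 - a)) % n := by
      rw [hs, Nat.mod_add_mod]
    have h3 : (a + r - 1) + (n + 1 - a) = n + r := by omega
    have : (x + n - a) % n = r % n := by
      rw [h1, h2, h3, Nat.add_mod_left]
    rw [this, Nat.mod_eq_of_lt (by omega)]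
    exact hr
  · intro hp
    set p := (x + n - a) % n with hpdef
    refine Finset.mem_image.mpr ⟨p, Finset.mem_range.mpr hp, ?_⟩
    have h2 : (a + p - 1) % n = ((a - 1) + (x + n - a)) % n := by
      have : a + p - 1 = (a - 1) + p := by omega
      rw [this, hpdef, Nat.add_mod_mod]
    have h3 : (a - 1) + (x + n - a) = (x - 1) + n := by omega
    rw [h2, h3, Nat.add_mod_right, Nat.mod_eq_of_lt (by omega)]
    omega

lemma cycInterval_card_le {n a l : ℕ} : (cycInterval n a l).card ≤ l := by
  refine le_trans Finset.card_image_le ?_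
  simp

lemma mem_covers_n {n : ℕ} {S : Finset ℕ} (hn : 1 ≤ n) (hS : S ⊆ Finset.Icc 1 n) :
    n ∈ {l | ∃ a ∈ Finset.Icc 1 n, S ⊆ cycInterval n a l} := by
  refine ⟨1, by simp; omega, fun x hx => ?_⟩
  have hx' := Finset.mem_Icc.mp (hS hx)
  rw [mem_cycInterval le_rfl hn hx'.1 hx'.2 le_rfl]
  exact Nat.mod_lt _ (by omega)

lemma covers_nonempty {n : ℕ} {S : Finset ℕ} (hn : 1 ≤ n) (hS : S ⊆ Finset.Icc 1 n) :
    {l | ∃ a ∈ Finset.Icc 1 n, S ⊆ cycInterval n a l}.Nonempty :=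
  ⟨n, mem_covers_n hn hS⟩

lemma cycDiameter_le_n {n : ℕ} {S : Finset ℕ} (hn : 1 ≤ n) (hS : S ⊆ Finset.Icc 1 n) :
    cycDiameter n S ≤ n := Nat.sInf_le (mem_covers_n hn hS)

lemma exists_cover {n : ℕ} {S : Finset ℕ} (hn : 1 ≤ n) (hS : S ⊆ Finset.Icc 1 n) :
    ∃ a ∈ Finset.Icc 1 n, S ⊆ cycInterval n a (cycDiameter n S) :=
  Nat.sInf_mem (covers_nonempty hn hS)

/-- Linear span bound on the cyclic diameter. -/
lemma cycDiameter_le_span {n p r : ℕ} {S : Finset ℕ} (hp : 1 ≤ p) (hpr : p ≤ r)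
    (hr : r ≤ n) (hsub : ∀ t ∈ S, p ≤ t ∧ t ≤ r) :
    cycDiameter n S ≤ r - p + 1 := by
  refine Nat.sInf_le ⟨p, Finset.mem_Icc.mpr ⟨hp, by omega⟩, fun x hx => ?_⟩
  obtain ⟨h1, h2⟩ := hsub x hx
  rw [mem_cycInterval hp (by omega) (by omega) (by omega) (by omega)]
  have : x + n - p = (x - p) + n := by omega
  rw [this, Nat.add_mod_right, Nat.mod_eq_of_lt (by omega)]
  omega

lemma eq_interval_of_diam_le_three {n : ℕ} {S : Finset ℕ} (hn : 3 ≤ n)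
    (hcard : S.card = 3) (hS : S ⊆ Finset.Icc 1 n) (hd : cycDiameter n S ≤ 3) :
    ∃ a, 1 ≤ a ∧ a ≤ n ∧ S = cycInterval n a 3 := by
  obtain ⟨a, ha, hsub⟩ := exists_cover (by omega) hS
  rw [Finset.mem_Icc] at ha
  have hd3 : cycDiameter n S = 3 := by
    have := le_trans (le_trans (le_of_eq hcard.symm) (Finset.card_le_card hsub))
      (cycInterval_card_le)
    omega
  rw [hd3] at hsub
  exact ⟨a, ha.1, ha.2, Finset.eq_of_subset_of_card_le hsub
    (le_trans cycInterval_card_le (by omega))⟩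

lemma cycInterval_three_shape {n a : ℕ} (hn : 3 ≤ n) (ha : 1 ≤ a) (han : a ≤ n) :
    (a ≤ n - 2 ∧ cycInterval n a 3 = {a, a + 1, a + 2}) ∨
    (a = n - 1 ∧ cycInterval n a 3 = {n - 1, n, 1}) ∨
    (a = n ∧ cycInterval n a 3 = {n, 1, 2}) := by
  have hr3 : (Finset.range 3) = {0, 1, 2} := by decide
  have himg : cycInterval n a 3 =
      {(a + 0 - 1) % n + 1, (a + 1 - 1) % n + 1, (a + 2 - 1) % n + 1} := by
    rw [cycInterval, hr3]
    simp [Finset.image_insert]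
  have hn0 : 0 < n := by omega
  rcases show a ≤ n - 2 ∨ a = n - 1 ∨ a = n by omega with h | h | h
  · left
    refine ⟨h, ?_⟩
    rw [himg]
    have c1 : (a + 0 - 1) % n + 1 = a := by rw [Nat.mod_eq_of_lt (by omega)]; omega
    have c2 : (a + 1 - 1) % n + 1 = a + 1 := by rw [Nat.mod_eq_of_lt (by omega)]; omega
    have c3 : (a + 2 - 1) % n + 1 = a + 2 := by rw [Nat.mod_eq_of_lt (by omega)]; omega
    rw [c1, c2, c3]
  · right; left
    refine ⟨h, ?_⟩
    rw [himg, h]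
    have e1 : (n - 1 + 0 - 1) % n = n - 2 := Nat.mod_eq_of_lt (by omega)
    have e2 : (n - 1 + 1 - 1) % n = n - 1 := Nat.mod_eq_of_lt (by omega)
    have e3 : (n - 1 + 2 - 1) % n = 0 := by
      have : n - 1 + 2 - 1 = n := by omega
      rw [this, Nat.mod_self]
    rw [e1, e2, e3]
    have c1 : n - 2 + 1 = n - 1 := by omega
    have c2 : n - 1 + 1 = n := by omega
    rw [c1, c2]
  · right; right
    refine ⟨h, ?_⟩
    rw [himg, h]
    have e1 : (n + 0 - 1) % n = n - 1 := Nat.mod_eq_of_lt (by omega)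
    have e2 : (n + 1 - 1) % n = 0 := Nat.mod_self n
    have e3 : (n + 2 - 1) % n = 1 := by
      have : n + 2 - 1 = 1 + n := by omega
      rw [this, Nat.add_mod_right, Nat.mod_eq_of_lt (by omega)]
    rw [e1, e2, e3]
    have c1 : n - 1 + 1 = n := by omega
    rw [c1]

/-- A cyclic interval of length 3 crosses nothing. -/
lemma interval_not_cross {n a : ℕ} {J : Finset ℕ} (hn : 3 ≤ n) (ha : 1 ≤ a)
    (han : a ≤ n) (hJ : J ⊆ Finset.Icc 1 n) :
    ¬ Cross (cycInterval n a 3 \ J) (J \ cycInterval n a 3) := by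
  intro hc
  rcases cycInterval_three_shape hn ha han with ⟨hb, hsh⟩ | ⟨hb, hsh⟩ | ⟨hb, hsh⟩ <;>
  · rw [hsh] at hc
    rcases hc with ⟨a₁, ha₁, b₁, hb₁, a₂, ha₂, b₂, hb₂, h₁, h₂, h₃⟩ |
      ⟨b₁, hb₁, a₁, ha₁, b₂, hb₂, a₂, ha₂, h₁, h₂, h₃⟩ <;>
    · rw [Finset.mem_sdiff] at ha₁ hb₁ ha₂ hb₂
      have e₁ := ha₁.1
      have e₂ := ha₂.1
      have f₁ := hb₁.2
      have f₂ := hb₂.2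
      have g₁ := Finset.mem_Icc.mp (hJ hb₁.1)
      have g₂ := Finset.mem_Icc.mp (hJ hb₂.1)
      simp only [Finset.mem_insert, Finset.mem_singleton] at e₁ e₂ f₁ f₂
      omega

lemma cross_diam_ge_four {n : ℕ} {R J : Finset ℕ} (hn : 3 ≤ n)
    (hcard : R.card = 3) (hR : R ⊆ Finset.Icc 1 n) (hJ : J ⊆ Finset.Icc 1 n)
    (hc : Cross (R \ J) (J \ R)) : 4 ≤ cycDiameter n R := by
  by_contra h
  obtain ⟨a, ha1, ha2, hEq⟩ := eq_interval_of_diam_le_three hn hcard hR (by omega)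
  rw [hEq] at hc
  exact interval_not_cross hn ha1 ha2 hJ hc

end AB
namespace AB

/-- Rotation by `r` on `{1,…,n}`, identity outside. -/
def grot (n r : ℕ) : ℕ → ℕ := fun t => if 1 ≤ t ∧ t ≤ n then (t - 1 + r) % n + 1 else t

/-- Reflection on `{1,…,n}`, identity outside. -/
def gref (n : ℕ) : ℕ → ℕ := fun t => if 1 ≤ t ∧ t ≤ n then n + 1 - t else t

lemma grot_val {n r t : ℕ} (hn : 0 < n) (ht : 1 ≤ t) (htn : t ≤ n) :
    grot n r t = if t + r % n ≤ n then t + r % n else t + r % n - n := by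
  have hmod : (t - 1 + r) % n = (t - 1 + r % n) % n := Nat.add_mod_mod _ _ _ |>.symm
  have hlt : t - 1 + r % n < 2 * n := by
    have := Nat.mod_lt r hn
    omega
  rw [grot, if_pos ⟨ht, htn⟩, hmod, mod_reduce hn hlt]
  have := Nat.mod_lt r hn
  split_ifs <;> omega

lemma grot_mem {n r t : ℕ} (hn : 0 < n) (ht : 1 ≤ t) (htn : t ≤ n) :
    1 ≤ grot n r t ∧ grot n r t ≤ n := by
  rw [grot_val hn ht htn]
  have := Nat.mod_lt r hn
  split_ifs <;> omega

lemma gref_val {n t : ℕ} (ht : 1 ≤ t) (htn : t ≤ n) : gref n t = n + 1 - t := by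
  rw [gref, if_pos ⟨ht, htn⟩]

lemma gref_mem {n t : ℕ} (ht : 1 ≤ t) (htn : t ≤ n) :
    1 ≤ gref n t ∧ gref n t ≤ n := by
  rw [gref_val ht htn]; omega

lemma grot_inv_eq {n r t : ℕ} (hn : 0 < n) (ht : 1 ≤ t) (htn : t ≤ n) :
    grot n (n - r % n) (grot n r t) = t := by
  have hρ := Nat.mod_lt r hn
  have h1 := grot_mem (r := r) hn ht htn
  rw [grot_val hn h1.1 h1.2, grot_val hn ht htn]
  have hσ : (n - r % n) % n = if r % n = 0 then 0 else n - r % n := by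
    split_ifs with h
    · rw [h, Nat.sub_zero, Nat.mod_self]
    · exact Nat.mod_eq_of_lt (by omega)
  rw [hσ]
  split_ifs <;> omega

lemma grot_inv_eq' {n r t : ℕ} (hn : 0 < n) (ht : 1 ≤ t) (htn : t ≤ n) :
    grot n r (grot n (n - r % n) t) = t := by
  have hρ := Nat.mod_lt r hn
  have h1 := grot_mem (r := n - r % n) hn ht htn
  rw [grot_val hn h1.1 h1.2, grot_val (r := n - r % n) hn ht htn]
  have hσ : (n - r % n) % n = if r % n = 0 then 0 else n - r % n := by
    split_ifs with h
    · rw [h, Nat.sub_zero, Nat.mod_self]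
    · exact Nat.mod_eq_of_lt (by omega)
  rw [hσ]
  split_ifs <;> omega

lemma gref_inv_eq {n t : ℕ} (ht : 1 ≤ t) (htn : t ≤ n) :
    gref n (gref n t) = t := by
  have h1 := gref_mem ht htn
  rw [gref_val h1.1 h1.2, gref_val ht htn]
  omega

lemma inj_of_inv {n : ℕ} {g g' : ℕ → ℕ} (hn : 0 < n)
    (hmem : ∀ t, 1 ≤ t → t ≤ n → 1 ≤ g t ∧ g t ≤ n)
    (hout : ∀ t, ¬(1 ≤ t ∧ t ≤ n) → g t = t)
    (hinv : ∀ t, 1 ≤ t → t ≤ n → g' (g t) = t) :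
    Function.Injective g := by
  intro s t h
  by_cases hs : 1 ≤ s ∧ s ≤ n <;> by_cases ht : 1 ≤ t ∧ t ≤ n
  · rw [← hinv s hs.1 hs.2, ← hinv t ht.1 ht.2, h]
  · have := hmem s hs.1 hs.2
    rw [hout t ht] at h
    omega
  · have := hmem t ht.1 ht.2
    rw [hout s hs] at h
    omega
  · rw [hout s hs, hout t ht] at h
    exact h

lemma grot_injective {n r : ℕ} (hn : 0 < n) : Function.Injective (grot n r) :=
  inj_of_inv hn (fun t h1 h2 => grot_mem hn h1 h2)
    (fun t h => by rw [grot, if_neg h]) (fun t h1 h2 => grot_inv_eq hn h1 h2)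

lemma gref_injective {n : ℕ} (hn : 0 < n) : Function.Injective (gref n) :=
  inj_of_inv hn (fun t h1 h2 => gref_mem h1 h2)
    (fun t h => by rw [gref, if_neg h]) (fun t h1 h2 => gref_inv_eq h1 h2)

lemma image_collapse {n : ℕ} {S : Finset ℕ} {g g' : ℕ → ℕ}
    (hS : S ⊆ Finset.Icc 1 n)
    (hinv : ∀ t, 1 ≤ t → t ≤ n → g' (g t) = t) :
    (S.image g).image g' = S := by
  rw [Finset.image_image]
  have : ∀ t ∈ S, (g' ∘ g) t = id t := by
    intro t ht
    have := Finset.mem_Icc.mp (hS ht)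
    exact hinv t this.1 this.2
  rw [Finset.image_congr this, Finset.image_id]

lemma image_subset_Icc {n : ℕ} {S : Finset ℕ} {g : ℕ → ℕ}
    (hS : S ⊆ Finset.Icc 1 n)
    (hmem : ∀ t, 1 ≤ t → t ≤ n → 1 ≤ g t ∧ g t ≤ n) :
    S.image g ⊆ Finset.Icc 1 n := by
  intro x hx
  obtain ⟨t, ht, rfl⟩ := Finset.mem_image.mp hx
  have := Finset.mem_Icc.mp (hS ht)
  exact Finset.mem_Icc.mpr (hmem t this.1 this.2)

lemma pat_image_grot {n r : ℕ} {A B : Finset ℕ} (hn : 0 < n)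
    (hA : A ⊆ Finset.Icc 1 n) (hB : B ⊆ Finset.Icc 1 n) (h : Pat A B) :
    Cross (A.image (grot n r)) (B.image (grot n r)) := by
  obtain ⟨a, ha, b, hb, a', ha', b', hb', h1, h2, h3⟩ := h
  have Ba := Finset.mem_Icc.mp (hA ha)
  have Bb := Finset.mem_Icc.mp (hB hb)
  have Ba' := Finset.mem_Icc.mp (hA ha')
  have Bb' := Finset.mem_Icc.mp (hB hb')
  have hρ := Nat.mod_lt r hn
  have va := grot_val (r := r) hn Ba.1 Ba.2
  have vb := grot_val (r := r) hn Bb.1 Bb.2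
  have va' := grot_val (r := r) hn Ba'.1 Ba'.2
  have vb' := grot_val (r := r) hn Bb'.1 Bb'.2
  have ma : grot n r a ∈ A.image (grot n r) := Finset.mem_image_of_mem _ ha
  have mb : grot n r b ∈ B.image (grot n r) := Finset.mem_image_of_mem _ hb
  have ma' : grot n r a' ∈ A.image (grot n r) := Finset.mem_image_of_mem _ ha'
  have mb' : grot n r b' ∈ B.image (grot n r) := Finset.mem_image_of_mem _ hb'
  by_cases w4 : b' + r % n ≤ n
  · -- nobody wraps
    exact pat_left ma mb ma' mb' (by rw [va, vb]; split_ifs <;> omega)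
      (by rw [vb, va']; split_ifs <;> omega) (by rw [va', vb']; split_ifs <;> omega)
  · by_cases w3 : a' + r % n ≤ n
    · -- only b' wraps
      exact pat_right mb' ma mb ma' (by rw [vb', va]; split_ifs <;> omega)
        (by rw [va, vb]; split_ifs <;> omega) (by rw [vb, va']; split_ifs <;> omega)
    · by_cases w2 : b + r % n ≤ n
      · -- a', b' wrap
        exact pat_left ma' mb' ma mb (by rw [va', vb']; split_ifs <;> omega)
          (by rw [vb', va]; split_ifs <;> omega) (by rw [va, vb]; split_ifs <;> omega)
      · by_cases w1 : a + r % n ≤ n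
        · -- b, a', b' wrap
          exact pat_right mb ma' mb' ma (by rw [vb, va']; split_ifs <;> omega)
            (by rw [va', vb']; split_ifs <;> omega) (by rw [vb', va]; split_ifs <;> omega)
        · -- all wrap
          exact pat_left ma mb ma' mb' (by rw [va, vb]; split_ifs <;> omega)
            (by rw [vb, va']; split_ifs <;> omega) (by rw [va', vb']; split_ifs <;> omega)

lemma cross_image_grot {n r : ℕ} {A B : Finset ℕ} (hn : 0 < n)
    (hA : A ⊆ Finset.Icc 1 n) (hB : B ⊆ Finset.Icc 1 n) (h : Cross A B) :
    Cross (A.image (grot n r)) (B.image (grot n r)) := by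
  rcases h with h | h
  · exact pat_image_grot hn hA hB h
  · exact cross_comm.mp (pat_image_grot hn hB hA h)

lemma pat_image_gref {n : ℕ} {A B : Finset ℕ} (hn : 0 < n)
    (hA : A ⊆ Finset.Icc 1 n) (hB : B ⊆ Finset.Icc 1 n) (h : Pat A B) :
    Pat (B.image (gref n)) (A.image (gref n)) := by
  obtain ⟨a, ha, b, hb, a', ha', b', hb', h1, h2, h3⟩ := h
  have Ba := Finset.mem_Icc.mp (hA ha)
  have Bb := Finset.mem_Icc.mp (hB hb)
  have Ba' := Finset.mem_Icc.mp (hA ha')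
  have Bb' := Finset.mem_Icc.mp (hB hb')
  refine ⟨gref n b', Finset.mem_image_of_mem _ hb', gref n a',
    Finset.mem_image_of_mem _ ha', gref n b, Finset.mem_image_of_mem _ hb,
    gref n a, Finset.mem_image_of_mem _ ha, ?_, ?_, ?_⟩ <;>
  · rw [gref_val (by omega) (by omega), gref_val (by omega) (by omega)]
    omega

lemma cross_image_gref {n : ℕ} {A B : Finset ℕ} (hn : 0 < n)
    (hA : A ⊆ Finset.Icc 1 n) (hB : B ⊆ Finset.Icc 1 n) (h : Cross A B) :
    Cross (A.image (gref n)) (B.image (gref n)) := by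
  rcases h with h | h
  · exact Or.inr (pat_image_gref hn hA hB h)
  · exact Or.inl (pat_image_gref hn hB hA h)

lemma mem_cycInterval_of_large {n a l x : ℕ} (hn : 0 < n) (ha : 1 ≤ a) (han : a ≤ n)
    (hx : 1 ≤ x) (hxn : x ≤ n) (hl : n ≤ l) : x ∈ cycInterval n a l := by
  refine Finset.mem_image.mpr ⟨(x + n - a) % n, Finset.mem_range.mpr
    (lt_of_lt_of_le (Nat.mod_lt _ hn) hl), ?_⟩
  have h2 : (a + (x + n - a) % n - 1) % n = ((a - 1) + (x + n - a)) % n := by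
    have : a + (x + n - a) % n - 1 = (a - 1) + (x + n - a) % n := by omega
    rw [this, Nat.add_mod_mod]
  have h3 : (a - 1) + (x + n - a) = (x - 1) + n := by omega
  rw [h2, h3, Nat.add_mod_right, Nat.mod_eq_of_lt (by omega)]
  omega

lemma pos_grot {n r t a : ℕ} (hn : 0 < n) (ht : 1 ≤ t) (htn : t ≤ n)
    (ha : 1 ≤ a) (han : a ≤ n) :
    (grot n r t + n - grot n r a) % n = (t + n - a) % n := by
  set X := grot n r t with hX
  set A := grot n r a with hA
  have hXm : 1 ≤ X ∧ X ≤ n := grot_mem hn ht htn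
  have hAm : 1 ≤ A ∧ A ≤ n := grot_mem hn ha han
  have hXe : X ≡ t + r [MOD n] := by
    rw [hX, grot, if_pos ⟨ht, htn⟩]
    calc (t - 1 + r) % n + 1 ≡ (t - 1 + r) + 1 [MOD n] :=
          Nat.ModEq.add_right 1 (Nat.mod_modEq _ n)
      _ = t + r := by omega
  have hAe : A ≡ a + r [MOD n] := by
    rw [hA, grot, if_pos ⟨ha, han⟩]
    calc (a - 1 + r) % n + 1 ≡ (a - 1 + r) + 1 [MOD n] :=
          Nat.ModEq.add_right 1 (Nat.mod_modEq _ n)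
      _ = a + r := by omega
  refine Nat.ModEq.add_right_cancel' (A + a) ?_
  have e1 : (X + n - A) + (A + a) = (X + n) + a := by omega
  have e2 : (t + n - a) + (A + a) = (t + n) + A := by omega
  rw [e1, e2]
  calc (X + n) + a ≡ ((t + r) + n) + a [MOD n] :=
        Nat.ModEq.add_right _ (Nat.ModEq.add_right _ hXe)
    _ = (t + n) + (a + r) := by omega
    _ ≡ (t + n) + A [MOD n] := Nat.ModEq.add_left _ hAe.symm

lemma cover_image_grot {n r l a : ℕ} {S : Finset ℕ} (hn : 0 < n)
    (hS : S ⊆ Finset.Icc 1 n) (ha : 1 ≤ a) (han : a ≤ n)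
    (hsub : S ⊆ cycInterval n a l) :
    ∃ a', (1 ≤ a' ∧ a' ≤ n) ∧ S.image (grot n r) ⊆ cycInterval n a' l := by
  by_cases hl : l ≤ n
  · refine ⟨grot n r a, grot_mem hn ha han, ?_⟩
    intro x hx
    obtain ⟨t, ht, rfl⟩ := Finset.mem_image.mp hx
    have Bt := Finset.mem_Icc.mp (hS ht)
    have hmem := (mem_cycInterval ha han Bt.1 Bt.2 hl).mp (hsub ht)
    have hga := grot_mem (r := r) hn ha han
    have hgt := grot_mem (r := r) hn Bt.1 Bt.2
    rw [mem_cycInterval hga.1 hga.2 hgt.1 hgt.2 hl,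
      pos_grot hn Bt.1 Bt.2 ha han]
    exact hmem
  · refine ⟨1, ⟨le_rfl, hn⟩, ?_⟩
    intro x hx
    obtain ⟨t, ht, rfl⟩ := Finset.mem_image.mp hx
    have Bt := Finset.mem_Icc.mp (hS ht)
    have hgt := grot_mem (r := r) hn Bt.1 Bt.2
    exact mem_cycInterval_of_large hn le_rfl hn hgt.1 hgt.2 (by omega)

lemma cover_image_gref {n l a : ℕ} {S : Finset ℕ} (hn : 0 < n)
    (hS : S ⊆ Finset.Icc 1 n) (ha : 1 ≤ a) (han : a ≤ n)
    (hsub : S ⊆ cycInterval n a l) :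
    ∃ a', (1 ≤ a' ∧ a' ≤ n) ∧ S.image (gref n) ⊆ cycInterval n a' l := by
  by_cases hl : l ≤ n
  · rcases Nat.eq_zero_or_pos l with hl0 | hl0
    · refine ⟨1, ⟨le_rfl, hn⟩, ?_⟩
      intro x hx
      obtain ⟨t, ht, rfl⟩ := Finset.mem_image.mp hx
      have := hsub ht
      rw [hl0] at this
      simp [cycInterval] at this
    · set T := (a - 1 + (l - 1)) % n + 1 with hT
      have hTm : 1 ≤ T ∧ T ≤ n := by
        constructor
        · omega
        · have := Nat.mod_lt (a - 1 + (l - 1)) hn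
          omega
      refine ⟨gref n T, gref_mem hTm.1 hTm.2, ?_⟩
      intro x hx
      obtain ⟨t, ht, rfl⟩ := Finset.mem_image.mp hx
      have Bt := Finset.mem_Icc.mp (hS ht)
      have hp := (mem_cycInterval ha han Bt.1 Bt.2 hl).mp (hsub ht)
      set p := (t + n - a) % n with hpd
      have hgT := gref_mem hTm.1 hTm.2
      have hgt := gref_mem Bt.1 Bt.2
      rw [mem_cycInterval hgT.1 hgT.2 hgt.1 hgt.2 hl]
      rw [gref_val Bt.1 Bt.2, gref_val hTm.1 hTm.2]
      have e0 : (n + 1 - t) + n - (n + 1 - T) = n + T - t := by omega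
      rw [e0]
      have key : (n + T - t) % n = (l - 1) - p := by
        have hTe : T ≡ a + l - 1 [MOD n] := by
          rw [hT]
          calc (a - 1 + (l - 1)) % n + 1 ≡ (a - 1 + (l - 1)) + 1 [MOD n] :=
                Nat.ModEq.add_right 1 (Nat.mod_modEq _ n)
            _ = a + l - 1 := by omega
        have hpe : p ≡ t + n - a [MOD n] := Nat.mod_modEq _ n
        have hcalc : (n + T - t) ≡ (l - 1) - p [MOD n] := by
          refine Nat.ModEq.add_right_cancel' (t + p) ?_
          have e1 : (n + T - t) + (t + p) = (n + T) + p := by omega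
          have e2 : ((l - 1) - p) + (t + p) = (l - 1) + t := by omega
          rw [e1, e2]
          calc (n + T) + p ≡ (n + (a + l - 1)) + (t + n - a) [MOD n] :=
                Nat.ModEq.add (Nat.ModEq.add_left _ hTe) hpe
            _ = ((l - 1) + t) + 2 * n := by omega
            _ ≡ ((l - 1) + t) + 0 [MOD n] :=
                Nat.ModEq.add_left _ ((Nat.modEq_zero_iff_dvd).mpr ⟨2, by ring⟩)
            _ = (l - 1) + t := by omega
        have : ((l - 1) - p) < n := by omega
        calc (n + T - t) % n = ((l - 1) - p) % n := hcalc
          _ = (l - 1) - p := Nat.mod_eq_of_lt this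
      rw [key]
      omega
  · refine ⟨1, ⟨le_rfl, hn⟩, ?_⟩
    intro x hx
    obtain ⟨t, ht, rfl⟩ := Finset.mem_image.mp hx
    have Bt := Finset.mem_Icc.mp (hS ht)
    have hgt := gref_mem Bt.1 Bt.2
    exact mem_cycInterval_of_large hn le_rfl hn hgt.1 hgt.2 (by omega)

end AB
namespace AB

/-- Generic transport of the diameter under a map with the cover-transport property. -/
lemma diam_image_le {n : ℕ} {S : Finset ℕ} {g : ℕ → ℕ} (hn : 0 < n)
    (hS : S ⊆ Finset.Icc 1 n)
    (hcov : ∀ a l, 1 ≤ a → a ≤ n → S ⊆ cycInterval n a l →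
      ∃ a', (1 ≤ a' ∧ a' ≤ n) ∧ S.image g ⊆ cycInterval n a' l) :
    cycDiameter n (S.image g) ≤ cycDiameter n S := by
  obtain ⟨a, ha, hsub⟩ := exists_cover hn hS
  rw [Finset.mem_Icc] at ha
  obtain ⟨a', ha', hsub'⟩ := hcov a _ ha.1 ha.2 hsub
  exact Nat.sInf_le ⟨a', Finset.mem_Icc.mpr ha', hsub'⟩

lemma diam_image_grot {n r : ℕ} {S : Finset ℕ} (hn : 0 < n)
    (hS : S ⊆ Finset.Icc 1 n) :
    cycDiameter n (S.image (grot n r)) = cycDiameter n S := by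
  have h1 : cycDiameter n (S.image (grot n r)) ≤ cycDiameter n S :=
    diam_image_le hn hS (fun a l ha han hsub => cover_image_grot hn hS ha han hsub)
  have hS' : S.image (grot n r) ⊆ Finset.Icc 1 n :=
    image_subset_Icc hS (fun t h1 h2 => grot_mem hn h1 h2)
  have hcol : (S.image (grot n r)).image (grot n (n - r % n)) = S :=
    image_collapse hS (fun t h1 h2 => grot_inv_eq hn h1 h2)
  have h2 : cycDiameter n S ≤ cycDiameter n (S.image (grot n r)) := by
    conv_lhs => rw [← hcol]
    exact diam_image_le hn hS'
      (fun a l ha han hsub => cover_image_grot hn hS' ha han hsub)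
  omega

lemma diam_image_gref {n : ℕ} {S : Finset ℕ} (hn : 0 < n)
    (hS : S ⊆ Finset.Icc 1 n) :
    cycDiameter n (S.image (gref n)) = cycDiameter n S := by
  have h1 : cycDiameter n (S.image (gref n)) ≤ cycDiameter n S :=
    diam_image_le hn hS (fun a l ha han hsub => cover_image_gref hn hS ha han hsub)
  have hS' : S.image (gref n) ⊆ Finset.Icc 1 n :=
    image_subset_Icc hS (fun t h1 h2 => gref_mem h1 h2)
  have hcol : (S.image (gref n)).image (gref n) = S :=
    image_collapse hS (fun t h1 h2 => gref_inv_eq h1 h2)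
  have h2 : cycDiameter n S ≤ cycDiameter n (S.image (gref n)) := by
    conv_lhs => rw [← hcol]
    exact diam_image_le hn hS'
      (fun a l ha han hsub => cover_image_gref hn hS' ha han hsub)
  omega

/-- All the structure we carry around for the contradiction argument. -/
def Good (n d : ℕ) (𝒟 : Finset (Finset ℕ)) : Prop :=
  MaximalWS n 3 𝒟 ∧ (∀ I ∈ 𝒟, cycDiameter n I ≠ 4) ∧
  (∀ I ∈ 𝒟, 4 ≤ cycDiameter n I → d ≤ cycDiameter n I)

/-- Transport of `Good` along a suitable bijection of `{1,…,n}`. -/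
lemma good_transport {n d : ℕ} {𝒟 : Finset (Finset ℕ)} {g g' : ℕ → ℕ} (hn : 0 < n)
    (hgmem : ∀ t, 1 ≤ t → t ≤ n → 1 ≤ g t ∧ g t ≤ n)
    (hvmem : ∀ t, 1 ≤ t → t ≤ n → 1 ≤ g' t ∧ g' t ≤ n)
    (hgi : ∀ t, 1 ≤ t → t ≤ n → g' (g t) = t)
    (hig : ∀ t, 1 ≤ t → t ≤ n → g (g' t) = t)
    (hginj : Function.Injective g) (hvinj : Function.Injective g')
    (hcg : ∀ A B : Finset ℕ, A ⊆ Finset.Icc 1 n → B ⊆ Finset.Icc 1 n →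
      Cross A B → Cross (A.image g) (B.image g))
    (hcv : ∀ A B : Finset ℕ, A ⊆ Finset.Icc 1 n → B ⊆ Finset.Icc 1 n →
      Cross A B → Cross (A.image g') (B.image g'))
    (hdiam : ∀ S : Finset ℕ, S ⊆ Finset.Icc 1 n →
      cycDiameter n (S.image g) = cycDiameter n S)
    (hG : Good n d 𝒟) :
    Good n d (𝒟.image (fun I => I.image g)) := by
  obtain ⟨⟨hmem, hpair, hmax⟩, hH, hd⟩ := hG
  have hIcc : ∀ I ∈ 𝒟, I ⊆ Finset.Icc 1 n := fun I hI => (hmem I hI).1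
  have hcard : ∀ I ∈ 𝒟, I.card = 3 := fun I hI => (hmem I hI).2
  -- WS-transfer
  have hws : ∀ I J : Finset ℕ, I ⊆ Finset.Icc 1 n → J ⊆ Finset.Icc 1 n →
      I.card = 3 → J.card = 3 →
      (WeaklySeparated I J ↔ WeaklySeparated (I.image g) (J.image g)) := by
    intro I J hI hJ hcI hcJ
    have hcI' : (I.image g).card = 3 := by
      rw [Finset.card_image_of_injective _ hginj, hcI]
    have hcJ' : (J.image g).card = 3 := by
      rw [Finset.card_image_of_injective _ hginj, hcJ]
    rw [ws_iff_not_cross (by omega), ws_iff_not_cross (by rw [hcI', hcJ'])]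
    have hsd1 : (I.image g) \ (J.image g) = (I \ J).image g :=
      (Finset.image_sdiff _ _ hginj).symm
    have hsd2 : (J.image g) \ (I.image g) = (J \ I).image g :=
      (Finset.image_sdiff _ _ hginj).symm
    rw [hsd1, hsd2]
    constructor
    · intro h hc
      have hIJ : (I \ J).image g ⊆ Finset.Icc 1 n :=
        image_subset_Icc (fun t ht => hI (Finset.mem_sdiff.mp ht).1) hgmem
      have hJI : (J \ I).image g ⊆ Finset.Icc 1 n :=
        image_subset_Icc (fun t ht => hJ (Finset.mem_sdiff.mp ht).1) hgmem
      have := hcv _ _ hIJ hJI hc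
      rw [image_collapse (fun t ht => hI (Finset.mem_sdiff.mp ht).1) hgi,
        image_collapse (fun t ht => hJ (Finset.mem_sdiff.mp ht).1) hgi] at this
      exact h this
    · intro h hc
      exact h (hcg _ _ (fun t ht => hI (Finset.mem_sdiff.mp ht).1)
        (fun t ht => hJ (Finset.mem_sdiff.mp ht).1) hc)
  refine ⟨⟨?_, ?_, ?_⟩, ?_, ?_⟩
  · intro K hK
    obtain ⟨I, hI, rfl⟩ := Finset.mem_image.mp hK
    exact ⟨image_subset_Icc (hIcc I hI) hgmem,
      by rw [Finset.card_image_of_injective _ hginj]; exact hcard I hI⟩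
  · intro K hK L hL
    obtain ⟨I, hI, rfl⟩ := Finset.mem_image.mp hK
    obtain ⟨J, hJ, rfl⟩ := Finset.mem_image.mp hL
    exact (hws I J (hIcc I hI) (hIcc J hJ) (hcard I hI) (hcard J hJ)).mp
      (hpair I hI J hJ)
  · intro J hJk hJws
    obtain ⟨hJIcc, hJc⟩ := hJk
    set J₀ := J.image g' with hJ₀
    have hJ₀Icc : J₀ ⊆ Finset.Icc 1 n := image_subset_Icc hJIcc hvmem
    have hJ₀c : J₀.card = 3 := by
      rw [hJ₀, Finset.card_image_of_injective _ hvinj, hJc]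
    have hJeq : J₀.image g = J := image_collapse hJIcc hig
    have hJ₀mem : J₀ ∈ 𝒟 := by
      refine hmax J₀ ⟨hJ₀Icc, hJ₀c⟩ ?_
      intro I hI
      have := hJws (I.image g) (Finset.mem_image_of_mem _ hI)
      rw [← hJeq] at this
      exact (hws I J₀ (hIcc I hI) hJ₀Icc (hcard I hI) hJ₀c).mpr this
    rw [← hJeq]
    exact Finset.mem_image_of_mem _ hJ₀mem
  · intro K hK
    obtain ⟨I, hI, rfl⟩ := Finset.mem_image.mp hK
    rw [hdiam I (hIcc I hI)]
    exact hH I hI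
  · intro K hK
    obtain ⟨I, hI, rfl⟩ := Finset.mem_image.mp hK
    rw [hdiam I (hIcc I hI)]
    exact hd I hI

lemma good_transport_grot {n d r : ℕ} {𝒟 : Finset (Finset ℕ)} (hn : 0 < n)
    (hG : Good n d 𝒟) : Good n d (𝒟.image (fun I => I.image (grot n r))) :=
  good_transport hn (fun t h1 h2 => grot_mem hn h1 h2)
    (fun t h1 h2 => grot_mem hn h1 h2)
    (fun t h1 h2 => grot_inv_eq hn h1 h2)
    (fun t h1 h2 => grot_inv_eq' hn h1 h2)
    (grot_injective hn) (grot_injective hn)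
    (fun A B hA hB h => cross_image_grot hn hA hB h)
    (fun A B hA hB h => cross_image_grot hn hA hB h)
    (fun S hS => diam_image_grot hn hS) hG


lemma good_transport_gref {n d : ℕ} {𝒟 : Finset (Finset ℕ)} (hn : 0 < n)
    (hG : Good n d 𝒟) : Good n d (𝒟.image (fun I => I.image (gref n))) :=
  good_transport hn (fun t h1 h2 => gref_mem h1 h2)
    (fun t h1 h2 => gref_mem h1 h2)
    (fun t h1 h2 => gref_inv_eq h1 h2)
    (fun t h1 h2 => gref_inv_eq h1 h2)
    (gref_injective hn) (gref_injective hn)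
    (fun A B hA hB h => cross_image_gref hn hA hB h)
    (fun A B hA hB h => cross_image_gref hn hA hB h)
    (fun S hS => diam_image_gref hn hS) hG

end AB
namespace AB

lemma eq_tripleton {R : Finset ℕ} (h3 : R.card = 3) {x y : ℕ} (hx : x ∈ R)
    (hy : y ∈ R) (hxy : x ≠ y) : ∃ w, w ≠ x ∧ w ≠ y ∧ R = {x, y, w} := by
  classical
  have hsub : ({x, y} : Finset ℕ) ⊆ R := by
    intro t ht
    simp only [Finset.mem_insert, Finset.mem_singleton] at ht
    rcases ht with rfl | rfl <;> assumption
  have hcard2 : ({x, y} : Finset ℕ).card = 2 := by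
    rw [Finset.card_insert_of_notMem (by simp [hxy]), Finset.card_singleton]
  have hsd : (R \ {x, y}).card = 1 := by
    rw [Finset.card_sdiff_of_subset hsub, h3, hcard2]
  obtain ⟨w, hw⟩ := Finset.card_eq_one.mp hsd
  have hwmem : w ∈ R \ ({x, y} : Finset ℕ) := by rw [hw]; simp
  rw [Finset.mem_sdiff] at hwmem
  simp only [Finset.mem_insert, Finset.mem_singleton] at hwmem
  refine ⟨w, fun h => hwmem.2 (Or.inl h), fun h => hwmem.2 (Or.inr h), ?_⟩
  apply Finset.eq_of_subset_of_card_le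
  swap
  · rw [h3]
    exact le_trans (Finset.card_insert_le _ _)
      (by have := Finset.card_insert_le y {w}; rw [Finset.card_singleton] at this; omega)
  · intro t ht
    by_cases h : t = x ∨ t = y
    · simp only [Finset.mem_insert, Finset.mem_singleton]; tauto
    · have : t ∈ R \ ({x, y} : Finset ℕ) := by
        rw [Finset.mem_sdiff]
        simp only [Finset.mem_insert, Finset.mem_singleton]
        exact ⟨ht, h⟩
      rw [hw] at this
      simp only [Finset.mem_singleton] at this
      simp [this]

lemma not_four {R : Finset ℕ} (h3 : R.card = 3) {a b c e : ℕ} (ha : a ∈ R)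
    (hb : b ∈ R) (hc : c ∈ R) (he : e ∈ R) (o1 : a < b) (o2 : b < c) (o3 : c < e) :
    False := by
  have hsub : ({a, b, c, e} : Finset ℕ) ⊆ R := by
    intro t ht
    simp only [Finset.mem_insert, Finset.mem_singleton] at ht
    rcases ht with rfl | rfl | rfl | rfl <;> assumption
  have hc4 : ({a, b, c, e} : Finset ℕ).card = 4 := by
    rw [Finset.card_insert_of_notMem (by simp only [Finset.mem_insert, Finset.mem_singleton]; omega),
      Finset.card_insert_of_notMem (by simp only [Finset.mem_insert, Finset.mem_singleton]; omega),
      Finset.card_insert_of_notMem (by simp only [Finset.mem_insert, Finset.mem_singleton]; omega), Finset.card_singleton]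
  have := Finset.card_le_card hsub
  omega

lemma probe_card {b : ℕ} (hb : 2 ≤ b) : ({b - 1, b, b + 2} : Finset ℕ).card = 3 := by
  rw [Finset.card_insert_of_notMem (by simp only [Finset.mem_insert, Finset.mem_singleton]; omega),
    Finset.card_insert_of_notMem (by simp only [Finset.mem_insert, Finset.mem_singleton]; omega), Finset.card_singleton]

lemma probe_subset {n b : ℕ} (hb : 2 ≤ b) (hbn : b + 2 ≤ n) :
    ({b - 1, b, b + 2} : Finset ℕ) ⊆ Finset.Icc 1 n := by
  intro t ht
  simp only [Finset.mem_insert, Finset.mem_singleton] at ht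
  rw [Finset.mem_Icc]
  omega

lemma probe_diam {n b : ℕ} (hn : 5 ≤ n) (hb : 2 ≤ b) (hbn : b + 2 ≤ n) :
    cycDiameter n ({b - 1, b, b + 2} : Finset ℕ) = 4 := by
  have hle : cycDiameter n ({b - 1, b, b + 2} : Finset ℕ) ≤ 4 := by
    have := cycDiameter_le_span (n := n) (p := b - 1) (r := b + 2)
      (S := {b - 1, b, b + 2}) (by omega) (by omega) (by omega) ?_
    · omega
    · intro t ht
      simp only [Finset.mem_insert, Finset.mem_singleton] at ht
      omega
  have hge : ¬ (cycDiameter n ({b - 1, b, b + 2} : Finset ℕ) ≤ 3) := by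
    intro h
    obtain ⟨a, ha, hsub⟩ := exists_cover (n := n) (by omega)
      (probe_subset hb hbn)
    rw [Finset.mem_Icc] at ha
    set l := cycDiameter n ({b - 1, b, b + 2} : Finset ℕ) with hl
    have m1 := (mem_cycInterval (x := b - 1) ha.1 ha.2 (by omega) (by omega)
      (by omega)).mp (hsub (by simp))
    have m2 := (mem_cycInterval (x := b) ha.1 ha.2 (by omega) (by omega)
      (by omega)).mp (hsub (by simp))
    have m3 := (mem_cycInterval (x := b + 2) ha.1 ha.2 (by omega) (by omega)
      (by omega)).mp (hsub (by simp))
    -- positions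
    have hrel2 : (b + n - a) % n = ((b - 1 + n - a) % n + 1) % n := by
      rw [Nat.mod_add_mod]
      congr 1
      omega
    have hrel3 : (b + 2 + n - a) % n = ((b - 1 + n - a) % n + 3) % n := by
      rw [Nat.mod_add_mod]
      congr 1
      omega
    have hp1 : (b - 1 + n - a) % n < n := Nat.mod_lt _ (by omega)
    rw [hrel2, mod_reduce (by omega) (by omega)] at m2
    rw [hrel3, mod_reduce (by omega) (by omega)] at m3
    split_ifs at m2 m3 <;> omega
  omega

section GoodCtx

variable {n d : ℕ} {𝒟 : Finset (Finset ℕ)}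

lemma good_mem (hG : Good n d 𝒟) {R : Finset ℕ} (hR : R ∈ 𝒟) :
    R ⊆ Finset.Icc 1 n ∧ R.card = 3 := hG.1.1 R hR

lemma members_not_cross (hG : Good n d 𝒟) {R P : Finset ℕ} (hR : R ∈ 𝒟)
    (hP : P ∈ 𝒟) : ¬ Cross (R \ P) (P \ R) := by
  have h1 := (good_mem hG hR).2
  have h2 := (good_mem hG hP).2
  exact (ws_iff_not_cross (by omega)).mp (hG.1.2.1 R hR P hP)

lemma exists_witness (hG : Good n d 𝒟) (hn : 5 ≤ n) {b : ℕ} (hb : 2 ≤ b)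
    (hbn : b + 2 ≤ n) :
    ∃ R ∈ 𝒟, Cross (R \ ({b - 1, b, b + 2} : Finset ℕ))
      (({b - 1, b, b + 2} : Finset ℕ) \ R) := by
  by_contra hcon
  push_neg at hcon
  have hall : ∀ I ∈ 𝒟, WeaklySeparated I ({b - 1, b, b + 2} : Finset ℕ) := by
    intro I hI
    have h3 := (good_mem hG hI).2
    exact (ws_iff_not_cross (by rw [h3, probe_card hb])).mpr (hcon I hI)
  have hQmem : ({b - 1, b, b + 2} : Finset ℕ) ∈ 𝒟 :=
    hG.1.2.2 _ ⟨probe_subset hb hbn, probe_card hb⟩ hall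
  exact hG.2.1 _ hQmem (probe_diam hn hb hbn)

lemma witness_conds {b : ℕ} {R : Finset ℕ} (hb : 2 ≤ b)
    (hc : Cross (R \ ({b - 1, b, b + 2} : Finset ℕ))
      (({b - 1, b, b + 2} : Finset ℕ) \ R)) :
    b + 1 ∈ R ∧ b + 2 ∉ R := by
  rcases hc with ⟨a, ha, b₁, hb₁, a', ha', b₂, hb₂, h1, h2, h3⟩ |
    ⟨b₁, hb₁, a, ha, b₂, hb₂, a', ha', h1, h2, h3⟩
  · rw [Finset.mem_sdiff] at ha hb₁ ha' hb₂
    have e1 := hb₁.1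
    have e2 := hb₂.1
    have f1 := ha'.2
    simp only [Finset.mem_insert, Finset.mem_singleton] at e1 e2 f1
    have : a' = b + 1 ∧ b₂ = b + 2 := by omega
    rw [← this.1, ← this.2]
    exact ⟨ha'.1, hb₂.2⟩
  · rw [Finset.mem_sdiff] at hb₁ ha hb₂ ha'
    have e1 := hb₁.1
    have e2 := hb₂.1
    have f1 := ha.2
    simp only [Finset.mem_insert, Finset.mem_singleton] at e1 e2 f1
    have : a = b + 1 ∧ b₂ = b + 2 := by omega
    rw [← this.1, ← this.2]
    exact ⟨ha.1, hb₂.2⟩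

lemma span_contra (hG : Good n d 𝒟) (hn : 5 ≤ n) {R Q : Finset ℕ} (hR : R ∈ 𝒟)
    (hQ : Q ⊆ Finset.Icc 1 n) (hc : Cross (R \ Q) (Q \ R)) {p r : ℕ}
    (hp : 1 ≤ p) (hpr : p ≤ r) (hrn : r ≤ n) (hspan : r - p + 1 < d)
    (hbound : ∀ t ∈ R, p ≤ t ∧ t ≤ r) : False := by
  obtain ⟨hIcc, h3⟩ := good_mem hG hR
  have h4 : 4 ≤ cycDiameter n R := cross_diam_ge_four (by omega) h3 hIcc hQ hc
  have hd := hG.2.2 R hR h4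
  have := cycDiameter_le_span hp hpr hrn hbound
  omega

end GoodCtx

end AB
namespace AB

lemma mem3 {x y z t : ℕ} : t ∈ ({x, y, z} : Finset ℕ) ↔ (t = x ∨ t = y ∨ t = z) := by
  simp

section Bash

variable {n d : ℕ} {𝒟 : Finset (Finset ℕ)}

lemma climb_step (hG : Good n d 𝒟) (hn : 5 ≤ n) (hd5 : 5 ≤ d) (hdn : d ≤ n)
    {z : ℕ} (hz1 : 2 ≤ z) (hz2 : z + 3 ≤ d) (hP : ({1, z, d} : Finset ℕ) ∈ 𝒟) :
    (({1, z + 1, d} : Finset ℕ) ∈ 𝒟) ∨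
      ∃ v, d < v ∧ v ≤ n ∧ ({z + 1, d, v} : Finset ℕ) ∈ 𝒟 := by
  obtain ⟨R, hR, hc⟩ := exists_witness hG hn (b := z) (by omega) (by omega)
  have hQsub : ({z - 1, z, z + 2} : Finset ℕ) ⊆ Finset.Icc 1 n :=
    probe_subset (by omega) (by omega)
  obtain ⟨hz1R, -⟩ := witness_conds (by omega) hc
  obtain ⟨hRIcc, hR3⟩ := good_mem hG hR
  have hncP : ¬ Cross (R \ ({1, z, d} : Finset ℕ)) (({1, z, d} : Finset ℕ) \ R) :=
    members_not_cross hG hR hP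
  have hRb : ∀ t ∈ R, 1 ≤ t ∧ t ≤ n := fun t ht => Finset.mem_Icc.mp (hRIcc ht)
  by_cases hdR : d ∈ R
  · obtain ⟨w, hw1, hw2, hReq⟩ := eq_tripleton hR3 hz1R hdR (by omega)
    have hRiff : ∀ t, t ∈ R ↔ (t = z + 1 ∨ t = d ∨ t = w) := fun t => by
      rw [hReq]; exact mem3
    have hwb : 1 ≤ w ∧ w ≤ n := hRb w ((hRiff w).mpr (by tauto))
    rcases (by omega : w = 1 ∨ (1 < w ∧ w < z) ∨ w = z ∨ (z < w ∧ w < d) ∨ d < w)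
      with hcase | hcase | hcase | hcase | hcase
    · -- w = 1 : survivor S2
      left
      have : ({1, z + 1, d} : Finset ℕ) = R := by
        rw [hReq, hcase]
        ext t
        simp only [Finset.mem_insert, Finset.mem_singleton]
        tauto
      rw [this]; exact hR
    · -- 1 < w < z : crossing with P
      exact absurd (pat_right (b := 1) (a := w) (b' := z) (a' := z + 1)
        (Finset.mem_sdiff.mpr ⟨mem3.mpr (by tauto),
          fun h => by rcases (hRiff 1).mp h with h | h | h <;> omega⟩)
        (Finset.mem_sdiff.mpr ⟨(hRiff w).mpr (by tauto),
          fun h => by rcases mem3.mp h with h | h | h <;> omega⟩)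
        (Finset.mem_sdiff.mpr ⟨mem3.mpr (by tauto),
          fun h => by rcases (hRiff z).mp h with h | h | h <;> omega⟩)
        (Finset.mem_sdiff.mpr ⟨(hRiff (z+1)).mpr (by tauto),
          fun h => by rcases mem3.mp h with h | h | h <;> omega⟩)
        (by omega) (by omega) (by omega)) hncP
    · -- w = z : small span
      exact (span_contra hG hn hR hQsub hc (p := z) (r := d) (by omega) (by omega)
        (by omega) (by omega) (fun t ht => by
          rcases (hRiff t).mp ht with h | h | h <;> omega)).elim
    · -- z < w < d : small span
      exact (span_contra hG hn hR hQsub hc (p := z + 1) (r := d) (by omega) (by omega)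
        (by omega) (by omega) (fun t ht => by
          rcases (hRiff t).mp ht with h | h | h <;> omega)).elim
    · -- d < w : survivor S1
      right
      exact ⟨w, hcase, hwb.2, by rw [← hReq]; exact hR⟩
  · -- d ∉ R : every element is < d, small span
    have hnobig : ∀ t ∈ R, t ≤ d - 1 := by
      intro t ht
      by_contra hbig
      have htd : d < t := by
        rcases (by omega : t = d ∨ d < t) with h | h
        · exact absurd (h ▸ ht) hdR
        · exact h
      have htb := hRb t ht
      by_cases h1R : (1 : ℕ) ∈ R
      · by_cases hzR : z ∈ R
        · exact not_four hR3 h1R hzR hz1R ht (by omega) (by omega) (by omega)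
        · exact absurd (pat_right (b := z) (a := z + 1) (b' := d) (a' := t)
            (Finset.mem_sdiff.mpr ⟨mem3.mpr (by tauto), hzR⟩)
            (Finset.mem_sdiff.mpr ⟨hz1R, fun h => by
              rcases mem3.mp h with h | h | h <;> omega⟩)
            (Finset.mem_sdiff.mpr ⟨mem3.mpr (by tauto), hdR⟩)
            (Finset.mem_sdiff.mpr ⟨ht, fun h => by
              rcases mem3.mp h with h | h | h
              · omega
              · omega
              · omega⟩)
            (by omega) (by omega) (by omega)) hncP
      · exact absurd (pat_right (b := 1) (a := z + 1) (b' := d) (a' := t)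
          (Finset.mem_sdiff.mpr ⟨mem3.mpr (by tauto), h1R⟩)
          (Finset.mem_sdiff.mpr ⟨hz1R, fun h => by
            rcases mem3.mp h with h | h | h <;> omega⟩)
          (Finset.mem_sdiff.mpr ⟨mem3.mpr (by tauto), hdR⟩)
          (Finset.mem_sdiff.mpr ⟨ht, fun h => by
            rcases mem3.mp h with h | h | h <;> omega⟩)
          (by omega) (by omega) (by omega)) hncP
    exact (span_contra hG hn hR hQsub hc (p := 1) (r := d - 1) (by omega)
      (by omega) (by omega) (by omega)
      (fun t ht => ⟨(hRb t ht).1, hnobig t ht⟩)).elim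

end Bash

end AB
namespace AB

section Bash2

variable {n d : ℕ} {𝒟 : Finset (Finset ℕ)}

lemma march_step (hG : Good n d 𝒟) (hn : 5 ≤ n) (hd5 : 5 ≤ d) (hdn : d ≤ n)
    {c m x : ℕ} (hc2 : 2 ≤ c) (hcm : c < m) (hm : m + 2 ≤ d)
    (hT : ({1, c, d} : Finset ℕ) ∈ 𝒟) (hW : ({m, d, x} : Finset ℕ) ∈ 𝒟)
    (hx1 : d < x) (hx2 : x ≤ n) :
    ∃ x', d < x' ∧ x' ≤ x ∧ m + 3 ≤ d ∧ ({m + 1, d, x'} : Finset ℕ) ∈ 𝒟 := by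
  obtain ⟨R, hR, hc⟩ := exists_witness hG hn (b := m) (by omega) (by omega)
  have hQsub : ({m - 1, m, m + 2} : Finset ℕ) ⊆ Finset.Icc 1 n :=
    probe_subset (by omega) (by omega)
  obtain ⟨hm1R, hm2R⟩ := witness_conds (by omega) hc
  obtain ⟨hRIcc, hR3⟩ := good_mem hG hR
  have hncT : ¬ Cross (R \ ({1, c, d} : Finset ℕ)) (({1, c, d} : Finset ℕ) \ R) :=
    members_not_cross hG hR hT
  have hncW : ¬ Cross (R \ ({m, d, x} : Finset ℕ)) (({m, d, x} : Finset ℕ) \ R) :=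
    members_not_cross hG hR hW
  have hRb : ∀ t ∈ R, 1 ≤ t ∧ t ≤ n := fun t ht => Finset.mem_Icc.mp (hRIcc ht)
  by_cases hdR : d ∈ R
  · have hm3 : m + 3 ≤ d := by
      rcases (by omega : m + 2 = d ∨ m + 3 ≤ d) with h | h
      · exact absurd (h ▸ hdR) hm2R
      · exact h
    obtain ⟨w, hw1, hw2, hReq⟩ := eq_tripleton hR3 hm1R hdR (by omega)
    have hRiff : ∀ t, t ∈ R ↔ (t = m + 1 ∨ t = d ∨ t = w) := fun t => by
      rw [hReq]; exact mem3
    have hwb : 1 ≤ w ∧ w ≤ n := hRb w ((hRiff w).mpr (by tauto))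
    have hwm2 : w ≠ m + 2 := fun h => hm2R ((hRiff (m+2)).mpr (by tauto))
    rcases (by omega : w < m ∨ w = m ∨ (m + 1 < w ∧ w < d) ∨ (d < w ∧ w ≤ x) ∨ x < w)
      with hcase | hcase | hcase | hcase | hcase
    · -- w < m : pattern (w, m, m+1, x) against W
      exact absurd (pat_left (a := w) (b := m) (a' := m + 1) (b' := x)
        (Finset.mem_sdiff.mpr ⟨(hRiff w).mpr (by tauto),
          fun h => by rcases mem3.mp h with h | h | h <;> omega⟩)
        (Finset.mem_sdiff.mpr ⟨mem3.mpr (by tauto),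
          fun h => by rcases (hRiff m).mp h with h | h | h <;> omega⟩)
        (Finset.mem_sdiff.mpr ⟨(hRiff (m+1)).mpr (by tauto),
          fun h => by rcases mem3.mp h with h | h | h <;> omega⟩)
        (Finset.mem_sdiff.mpr ⟨mem3.mpr (by tauto),
          fun h => by rcases (hRiff x).mp h with h | h | h <;> omega⟩)
        (by omega) (by omega) (by omega)) hncW
    · -- w = m : small span
      exact ((span_contra hG hn hR hQsub hc (p := m) (r := d) (by omega) (by omega)
        (by omega) (by omega) (fun t ht => by
          rcases (hRiff t).mp ht with h | h | h <;> omega))).elim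
    · -- m+1 < w < d : small span
      exact ((span_contra hG hn hR hQsub hc (p := m + 1) (r := d) (by omega)
        (by omega) (by omega) (by omega) (fun t ht => by
          rcases (hRiff t).mp ht with h | h | h <;> omega))).elim
    · -- d < w ≤ x : survivor
      exact ⟨w, hcase.1, hcase.2, hm3, by rw [← hReq]; exact hR⟩
    · -- x < w : pattern (m, m+1, x, w) against W
      exact absurd (pat_right (b := m) (a := m + 1) (b' := x) (a' := w)
        (Finset.mem_sdiff.mpr ⟨mem3.mpr (by tauto),
          fun h => by rcases (hRiff m).mp h with h | h | h <;> omega⟩)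
        (Finset.mem_sdiff.mpr ⟨(hRiff (m+1)).mpr (by tauto),
          fun h => by rcases mem3.mp h with h | h | h <;> omega⟩)
        (Finset.mem_sdiff.mpr ⟨mem3.mpr (by tauto),
          fun h => by rcases (hRiff x).mp h with h | h | h <;> omega⟩)
        (Finset.mem_sdiff.mpr ⟨(hRiff w).mpr (by tauto),
          fun h => by rcases mem3.mp h with h | h | h <;> omega⟩)
        (by omega) (by omega) (by omega)) hncW
  · -- d ∉ R : every element ≤ d - 1, small span, contradiction
    have hnobig : ∀ t ∈ R, t ≤ d - 1 := by
      intro t ht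
      by_contra hbig
      have htd : d < t := by
        rcases (by omega : t = d ∨ d < t) with h | h
        · exact absurd (h ▸ ht) hdR
        · exact h
      have htb := hRb t ht
      by_cases hmR : m ∈ R
      · obtain ⟨w, hw1, hw2, hReq⟩ := eq_tripleton hR3 hmR hm1R (by omega)
        have hRiff : ∀ t, t ∈ R ↔ (t = m ∨ t = m + 1 ∨ t = w) := fun t => by
          rw [hReq]; exact mem3
        have htw : t = w := by
          rcases (hRiff t).mp ht with h | h | h <;> omega
        exact absurd (pat_right (b := c) (a := m) (b' := d) (a' := t)
          (Finset.mem_sdiff.mpr ⟨mem3.mpr (by tauto),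
            fun h => by rcases (hRiff c).mp h with h | h | h <;> omega⟩)
          (Finset.mem_sdiff.mpr ⟨hmR,
            fun h => by rcases mem3.mp h with h | h | h <;> omega⟩)
          (Finset.mem_sdiff.mpr ⟨mem3.mpr (by tauto), hdR⟩)
          (Finset.mem_sdiff.mpr ⟨ht, fun h => by
            rcases mem3.mp h with h | h | h <;> omega⟩)
          (by omega) (by omega) (by omega)) hncT
      · by_cases htx : t = x
        · by_cases hcR : c ∈ R
          · by_cases h1R : (1 : ℕ) ∈ R
            · exact not_four hR3 h1R hcR hm1R ht (by omega) (by omega) (by omega)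
            · exact absurd (pat_right (b := 1) (a := m + 1) (b' := d) (a' := t)
                (Finset.mem_sdiff.mpr ⟨mem3.mpr (by tauto), h1R⟩)
                (Finset.mem_sdiff.mpr ⟨hm1R, fun h => by
                  rcases mem3.mp h with h | h | h <;> omega⟩)
                (Finset.mem_sdiff.mpr ⟨mem3.mpr (by tauto), hdR⟩)
                (Finset.mem_sdiff.mpr ⟨ht, fun h => by
                  rcases mem3.mp h with h | h | h <;> omega⟩)
                (by omega) (by omega) (by omega)) hncT
          · exact absurd (pat_right (b := c) (a := m + 1) (b' := d) (a' := t)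
              (Finset.mem_sdiff.mpr ⟨mem3.mpr (by tauto), hcR⟩)
              (Finset.mem_sdiff.mpr ⟨hm1R, fun h => by
                rcases mem3.mp h with h | h | h <;> omega⟩)
              (Finset.mem_sdiff.mpr ⟨mem3.mpr (by tauto), hdR⟩)
              (Finset.mem_sdiff.mpr ⟨ht, fun h => by
                rcases mem3.mp h with h | h | h <;> omega⟩)
              (by omega) (by omega) (by omega)) hncT
        · exact absurd (pat_right (b := m) (a := m + 1) (b' := d) (a' := t)
            (Finset.mem_sdiff.mpr ⟨mem3.mpr (by tauto), hmR⟩)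
            (Finset.mem_sdiff.mpr ⟨hm1R, fun h => by
              rcases mem3.mp h with h | h | h <;> omega⟩)
            (Finset.mem_sdiff.mpr ⟨mem3.mpr (by tauto), hdR⟩)
            (Finset.mem_sdiff.mpr ⟨ht, fun h => by
              rcases mem3.mp h with h | h | h <;> omega⟩)
            (by omega) (by omega) (by omega)) hncW
    exact ((span_contra hG hn hR hQsub hc (p := 1) (r := d - 1) (by omega)
      (by omega) (by omega) (by omega)
      (fun t ht => ⟨(hRb t ht).1, hnobig t ht⟩))).elim

/-- The rightward march: starting from a member `{m, d, x}` protruding past `d`,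
with a member `{1, c, d}` with `c < m`, we reach a contradiction. -/
lemma march (hG : Good n d 𝒟) (hn : 5 ≤ n) (hd5 : 5 ≤ d) (hdn : d ≤ n)
    {c : ℕ} (hc2 : 2 ≤ c) (hT : ({1, c, d} : Finset ℕ) ∈ 𝒟) :
    ∀ k m x, c < m → m + 2 ≤ d → d < x → x ≤ n → d ≤ m + k →
      ({m, d, x} : Finset ℕ) ∈ 𝒟 → False := by
  intro k
  induction k with
  | zero => intro m x h1 h2 h3 h4 h5 h6; omega
  | succ k ih =>
    intro m x h1 h2 h3 h4 h5 h6
    obtain ⟨x', hx'1, hx'2, hm3, hmem⟩ :=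
      march_step hG hn hd5 hdn hc2 h1 h2 hT h6 h3 h4
    exact ih (m + 1) x' (by omega) (by omega) hx'1 (by omega) (by omega) hmem

lemma standalone (hG : Good n d 𝒟) (hn : 5 ≤ n) (hd5 : 5 ≤ d) (hdn : d ≤ n)
    {m : ℕ} (hm2 : m + 2 = d) (hP : ({1, m, d} : Finset ℕ) ∈ 𝒟) : False := by
  obtain ⟨R, hR, hc⟩ := exists_witness hG hn (b := m) (by omega) (by omega)
  have hQsub : ({m - 1, m, m + 2} : Finset ℕ) ⊆ Finset.Icc 1 n :=
    probe_subset (by omega) (by omega)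
  obtain ⟨hm1R, hm2R⟩ := witness_conds (by omega) hc
  obtain ⟨hRIcc, hR3⟩ := good_mem hG hR
  have hncP : ¬ Cross (R \ ({1, m, d} : Finset ℕ)) (({1, m, d} : Finset ℕ) \ R) :=
    members_not_cross hG hR hP
  have hRb : ∀ t ∈ R, 1 ≤ t ∧ t ≤ n := fun t ht => Finset.mem_Icc.mp (hRIcc ht)
  have hdR : d ∉ R := by rw [← hm2]; exact hm2R
  have hnobig : ∀ t ∈ R, t ≤ d - 1 := by
    intro t ht
    by_contra hbig
    have htd : d < t := by
      rcases (by omega : t = d ∨ d < t) with h | h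
      · exact absurd (h ▸ ht) hdR
      · exact h
    have htb := hRb t ht
    by_cases hmR : m ∈ R
    · by_cases h1R : (1 : ℕ) ∈ R
      · exact not_four hR3 h1R hmR hm1R ht (by omega) (by omega) (by omega)
      · exact absurd (pat_right (b := 1) (a := m + 1) (b' := d) (a' := t)
          (Finset.mem_sdiff.mpr ⟨mem3.mpr (by tauto), h1R⟩)
          (Finset.mem_sdiff.mpr ⟨hm1R, fun h => by
            rcases mem3.mp h with h | h | h <;> omega⟩)
          (Finset.mem_sdiff.mpr ⟨mem3.mpr (by tauto), hdR⟩)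
          (Finset.mem_sdiff.mpr ⟨ht, fun h => by
            rcases mem3.mp h with h | h | h <;> omega⟩)
          (by omega) (by omega) (by omega)) hncP
    · exact absurd (pat_right (b := m) (a := m + 1) (b' := d) (a' := t)
        (Finset.mem_sdiff.mpr ⟨mem3.mpr (by tauto), hmR⟩)
        (Finset.mem_sdiff.mpr ⟨hm1R, fun h => by
          rcases mem3.mp h with h | h | h <;> omega⟩)
        (Finset.mem_sdiff.mpr ⟨mem3.mpr (by tauto), hdR⟩)
        (Finset.mem_sdiff.mpr ⟨ht, fun h => by
          rcases mem3.mp h with h | h | h <;> omega⟩)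
        (by omega) (by omega) (by omega)) hncP
  exact span_contra hG hn hR hQsub hc (p := 1) (r := d - 1) (by omega)
    (by omega) (by omega) (by omega)
    (fun t ht => ⟨(hRb t ht).1, hnobig t ht⟩)

end Bash2

end AB
namespace AB

lemma pos_formula {n a p : ℕ} (hn : 0 < n) (ha : 1 ≤ a) (han : a ≤ n) (hp : p < n) :
    ((a + p - 1) % n + 1 + n - a) % n = p := by
  set s := (a + p - 1) % n with hs
  have hslt : s < n := Nat.mod_lt _ hn
  have h1 : s + 1 + n - a = s + (n + 1 - a) := by omega
  have h2 : (s + (n + 1 - a)) % n = ((a + p - 1) + (n + 1 - a)) % n := by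
    rw [hs, Nat.mod_add_mod]
  have h3 : (a + p - 1) + (n + 1 - a) = n + p := by omega
  rw [h1, h2, h3, Nat.add_mod_left]
  exact Nat.mod_eq_of_lt hp

lemma pos_zero {n a t : ℕ} (hn : 0 < n) (ha : 1 ≤ a) (han : a ≤ n) (ht : 1 ≤ t)
    (htn : t ≤ n) (h : (t + n - a) % n = 0) : t = a := by
  have h2n : t + n - a < 2 * n := by omega
  have := mod_reduce (X := t + n - a) hn h2n
  split_ifs at this <;> omega

lemma pos_inj {n a t u : ℕ} (hn : 0 < n) (ha : 1 ≤ a) (han : a ≤ n) (ht : 1 ≤ t)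
    (htn : t ≤ n) (hu : 1 ≤ u) (hun : u ≤ n)
    (h : (t + n - a) % n = (u + n - a) % n) : t = u := by
  have e1 := mod_reduce (X := t + n - a) hn (by omega)
  have e2 := mod_reduce (X := u + n - a) hn (by omega)
  split_ifs at e1 e2 <;> omega

lemma shrink_bot {n a l : ℕ} {S : Finset ℕ} (hn : 0 < n) (ha : 1 ≤ a) (han : a ≤ n)
    (hl : 1 ≤ l) (hln : l ≤ n) (hS : S ⊆ Finset.Icc 1 n)
    (hsub : S ⊆ cycInterval n a l) (hna : a ∉ S) :
    S ⊆ cycInterval n (a % n + 1) (l - 1) := by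
  intro t ht
  have htb := Finset.mem_Icc.mp (hS ht)
  have hp := (mem_cycInterval ha han htb.1 htb.2 hln).mp (hsub ht)
  set p := (t + n - a) % n with hpd
  have hp0 : p ≠ 0 := fun h => hna ((pos_zero hn ha han htb.1 htb.2 h) ▸ ht)
  have ha' : 1 ≤ a % n + 1 ∧ a % n + 1 ≤ n := by
    have := Nat.mod_lt a hn
    omega
  rw [mem_cycInterval ha'.1 ha'.2 htb.1 htb.2 (by omega)]
  have key : (t + n - (a % n + 1)) % n = p - 1 := by
    rcases (by omega : a < n ∨ a = n) with hcase | hcase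
    · have hmod : a % n = a := Nat.mod_eq_of_lt hcase
      rw [hmod]
      have e1 := mod_reduce (X := t + n - a) hn (by omega)
      have e2 := mod_reduce (X := t + n - (a + 1)) hn (by omega)
      split_ifs at e1 e2 <;> omega
    · rw [hcase, Nat.mod_self]
      have hpt : p = t % n := by
        rw [hpd]
        congr 1
        omega
      have htn' : t < n := by
        by_contra hh
        have : t = n := by omega
        rw [this, Nat.mod_self] at hpt
        exact hp0 hpt
      rw [Nat.mod_eq_of_lt htn'] at hpt
      have e1 : t + n - (0 + 1) = (t - 1) + n := by omega
      rw [e1, Nat.add_mod_right, Nat.mod_eq_of_lt (by omega)]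
      omega
  rw [key]
  omega

lemma shrink_top {n a l : ℕ} {S : Finset ℕ} (hn : 0 < n) (ha : 1 ≤ a) (han : a ≤ n)
    (hl : 1 ≤ l) (hln : l ≤ n) (hS : S ⊆ Finset.Icc 1 n)
    (hsub : S ⊆ cycInterval n a l) (hna : (a + (l - 1) - 1) % n + 1 ∉ S) :
    S ⊆ cycInterval n a (l - 1) := by
  intro t ht
  have htb := Finset.mem_Icc.mp (hS ht)
  have hp := (mem_cycInterval ha han htb.1 htb.2 hln).mp (hsub ht)
  rw [mem_cycInterval ha han htb.1 htb.2 (by omega)]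
  set p := (t + n - a) % n with hpd
  have hptop : p ≠ l - 1 := by
    intro h
    set top := (a + (l - 1) - 1) % n + 1 with htop
    have htopb : 1 ≤ top ∧ top ≤ n := by
      have := Nat.mod_lt (a + (l - 1) - 1) hn
      omega
    have hpt : (top + n - a) % n = l - 1 := pos_formula hn ha han (by omega)
    have := pos_inj hn ha han htb.1 htb.2 htopb.1 htopb.2
      (by rw [hpt, ← hpd]; exact h)
    exact hna (this ▸ ht)
  omega

end AB
namespace AB

section Main

variable {n d : ℕ} {𝒟 : Finset (Finset ℕ)}

lemma climb (hG : Good n d 𝒟) (hn : 5 ≤ n) (hd5 : 5 ≤ d) (hdn : d ≤ n) :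
    ∀ k z, 2 ≤ z → z + 2 ≤ d → d ≤ z + 2 + k →
      ({1, z, d} : Finset ℕ) ∈ 𝒟 → False := by
  intro k
  induction k with
  | zero =>
    intro z h1 h2 h3 hP
    exact standalone hG hn hd5 hdn (by omega : z + 2 = d) hP
  | succ k ih =>
    intro z h1 h2 h3 hP
    rcases (by omega : z + 2 = d ∨ z + 3 ≤ d) with h | h
    · exact standalone hG hn hd5 hdn h hP
    · rcases climb_step hG hn hd5 hdn h1 h hP with hS2 | ⟨v, hv1, hv2, hS1⟩
      · exact ih (z + 1) (by omega) (by omega) (by omega) hS2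
      · exact march hG hn hd5 hdn h1 hP d (z + 1) v (by omega) (by omega) hv1 hv2
          (by omega) hS1

lemma reflect_member (hn : 5 ≤ n) (hd5 : 5 ≤ d) (hdn : d ≤ n) {y : ℕ}
    (hy2 : 2 ≤ y) (hy : y + 1 = d) (hP : ({1, y, d} : Finset ℕ) ∈ 𝒟) :
    ({1, 2, d} : Finset ℕ) ∈
      (𝒟.image (fun I => I.image (gref n))).image (fun I => I.image (grot n d)) := by
  have g1 : gref n 1 = n := by rw [gref_val (by omega) (by omega)]; omega
  have gy : gref n y = n + 2 - d := by rw [gref_val (by omega) (by omega)]; omega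
  have gd : gref n d = n + 1 - d := by rw [gref_val (by omega) (by omega)]
  have c1 : grot n d n = d := by
    simp only [grot]
    rw [if_pos (show 1 ≤ n ∧ n ≤ n by omega),
      show n - 1 + d = (d - 1) + n by omega, Nat.add_mod_right,
      Nat.mod_eq_of_lt (by omega)]
    omega
  have c2 : grot n d (n + 2 - d) = 2 := by
    simp only [grot]
    rw [if_pos (show 1 ≤ n + 2 - d ∧ n + 2 - d ≤ n by omega),
      show n + 2 - d - 1 + d = 1 + n by omega, Nat.add_mod_right,
      Nat.mod_eq_of_lt (by omega)]
  have c3 : grot n d (n + 1 - d) = 1 := by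
    simp only [grot]
    rw [if_pos (show 1 ≤ n + 1 - d ∧ n + 1 - d ≤ n by omega),
      show n + 1 - d - 1 + d = n by omega, Nat.mod_self]
  have hinner : ({1, y, d} : Finset ℕ).image (gref n) = {n, n + 2 - d, n + 1 - d} := by
    rw [Finset.image_insert, Finset.image_insert, Finset.image_singleton, g1, gy, gd]
  have himg : ((({1, y, d} : Finset ℕ).image (gref n)).image (grot n d)) =
      {1, 2, d} := by
    rw [hinner, Finset.image_insert, Finset.image_insert, Finset.image_singleton,
      c1, c2, c3]
    ext t
    simp only [Finset.mem_insert, Finset.mem_singleton]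
    tauto
  have hmm := Finset.mem_image_of_mem (fun I => I.image (grot n d))
    (Finset.mem_image_of_mem (fun I => I.image (gref n)) hP)
  have hmm' : (({1, y, d} : Finset ℕ).image (gref n)).image (grot n d) ∈
      (𝒟.image (fun I => I.image (gref n))).image (fun I => I.image (grot n d)) := hmm
  rw [himg] at hmm'
  exact hmm'

lemma frame_false (hG : Good n d 𝒟) (hn : 5 ≤ n) (hd5 : 5 ≤ d) (hdn : d ≤ n)
    {y : ℕ} (hy1 : 1 < y) (hy2 : y < d) (hP : ({1, y, d} : Finset ℕ) ∈ 𝒟) :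
    False := by
  rcases (by omega : y + 2 ≤ d ∨ y + 1 = d) with h | h
  · exact climb hG hn hd5 hdn d y (by omega) h (by omega) hP
  · have hG2 : Good n d ((𝒟.image (fun I => I.image (gref n))).image
        (fun I => I.image (grot n d))) :=
      good_transport_grot (by omega) (good_transport_gref (by omega) hG)
    have hmem := reflect_member hn hd5 hdn (by omega) h hP
    exact climb hG2 hn hd5 hdn d 2 (by omega) (by omega) (by omega) hmem

theorem part1 (hn : 5 ≤ n) {𝒞 : Finset (Finset ℕ)} (h𝒞 : MaximalWS n 3 𝒞) :
    ∃ I ∈ 𝒞, cycDiameter n I = 4 := by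
  classical
  by_contra hcon
  push_neg at hcon
  have hG0 : Good n 0 𝒞 := ⟨h𝒞, hcon, fun I hI h4 => Nat.zero_le _⟩
  obtain ⟨R₀, hR₀, hc₀⟩ := exists_witness hG0 hn (b := 2) (by omega) (by omega)
  have h4R₀ : 4 ≤ cycDiameter n R₀ := by
    obtain ⟨hIcc, h3⟩ := good_mem hG0 hR₀
    exact cross_diam_ge_four (by omega) h3 hIcc
      (probe_subset (by omega) (by omega)) hc₀
  have h𝒩ne : (𝒞.filter (fun I => 4 ≤ cycDiameter n I)).Nonempty :=
    ⟨R₀, Finset.mem_filter.mpr ⟨hR₀, h4R₀⟩⟩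
  have hdisne : ((𝒞.filter (fun I => 4 ≤ cycDiameter n I)).image
      (cycDiameter n)).Nonempty := h𝒩ne.image _
  set d := ((𝒞.filter (fun I => 4 ≤ cycDiameter n I)).image
      (cycDiameter n)).min' hdisne with hd
  obtain ⟨P₀, hP₀mem, hP₀d⟩ := Finset.mem_image.mp
    (((𝒞.filter (fun I => 4 ≤ cycDiameter n I)).image (cycDiameter n)).min'_mem hdisne)
  rw [Finset.mem_filter] at hP₀mem
  rw [← hd] at hP₀d
  have hdmin : ∀ I ∈ 𝒞, 4 ≤ cycDiameter n I → d ≤ cycDiameter n I := by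
    intro I hI h4
    exact Finset.min'_le _ _ (Finset.mem_image_of_mem _ (Finset.mem_filter.mpr ⟨hI, h4⟩))
  have hGd : Good n d 𝒞 := ⟨h𝒞, hcon, hdmin⟩
  have hd4 : 4 ≤ d := by rw [← hP₀d]; exact hP₀mem.2
  have hd5 : 5 ≤ d := by
    rcases (by omega : d = 4 ∨ 5 ≤ d) with h | h
    · exact absurd (hP₀d.trans h) (hcon P₀ hP₀mem.1)
    · exact h
  have hP₀Icc := (h𝒞.1 P₀ hP₀mem.1).1
  have hP₀3 := (h𝒞.1 P₀ hP₀mem.1).2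
  have hdn : d ≤ n := by rw [← hP₀d]; exact cycDiameter_le_n (by omega) hP₀Icc
  -- set up the frame [1, d] for P₀ after rotation
  obtain ⟨a, haIcc, hsub⟩ := exists_cover (n := n) (by omega) hP₀Icc
  rw [Finset.mem_Icc] at haIcc
  rw [hP₀d] at hsub
  have hn0 : 0 < n := by omega
  have haP : a ∈ P₀ := by
    by_contra hna
    have hsh := shrink_bot hn0 haIcc.1 haIcc.2 (by omega) (by omega) hP₀Icc hsub hna
    have hle : cycDiameter n P₀ ≤ d - 1 :=
      Nat.sInf_le ⟨a % n + 1, Finset.mem_Icc.mpr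
        ⟨by omega, by have := Nat.mod_lt a hn0; omega⟩, hsh⟩
    omega
  have htopP : (a + (d - 1) - 1) % n + 1 ∈ P₀ := by
    by_contra hna
    have hsh := shrink_top hn0 haIcc.1 haIcc.2 (by omega) (by omega) hP₀Icc hsub hna
    have hle : cycDiameter n P₀ ≤ d - 1 :=
      Nat.sInf_le ⟨a, Finset.mem_Icc.mpr ⟨haIcc.1, haIcc.2⟩, hsh⟩
    omega
  have htopb : 1 ≤ (a + (d - 1) - 1) % n + 1 ∧ (a + (d - 1) - 1) % n + 1 ≤ n := by
    have := Nat.mod_lt (a + (d - 1) - 1) hn0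
    omega
  have hpostop : ((a + (d - 1) - 1) % n + 1 + n - a) % n = d - 1 :=
    pos_formula hn0 haIcc.1 haIcc.2 (by omega)
  have hatop : a ≠ (a + (d - 1) - 1) % n + 1 := by
    intro h
    rw [← h] at hpostop
    rw [show a + n - a = n by omega, Nat.mod_self] at hpostop
    omega
  obtain ⟨w₀, hw₀1, hw₀2, hP₀eq⟩ := eq_tripleton hP₀3 haP htopP hatop
  have hw₀P : w₀ ∈ P₀ := by rw [hP₀eq]; simp
  have hw₀b := Finset.mem_Icc.mp (hP₀Icc hw₀P)
  have hposw := (mem_cycInterval haIcc.1 haIcc.2 hw₀b.1 hw₀b.2 (by omega)).mp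
    (hsub hw₀P)
  have hpw0 : (w₀ + n - a) % n ≠ 0 := fun h =>
    hw₀1 (pos_zero hn0 haIcc.1 haIcc.2 hw₀b.1 hw₀b.2 h)
  have hpwtop : (w₀ + n - a) % n ≠ d - 1 := by
    intro h
    exact hw₀2 (pos_inj hn0 haIcc.1 haIcc.2 hw₀b.1 hw₀b.2 htopb.1 htopb.2
      (by rw [hpostop]; exact h))
  -- rotate so that a ↦ 1
  have hGrot : Good n d (𝒞.image (fun I => I.image (grot n (n + 1 - a)))) :=
    good_transport_grot hn0 hGd
  have hga : grot n (n + 1 - a) a = 1 := by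
    simp only [grot]
    rw [if_pos (show 1 ≤ a ∧ a ≤ n from haIcc),
      show a - 1 + (n + 1 - a) = n by omega, Nat.mod_self]
  have hgtb : ∀ t, 1 ≤ t → t ≤ n →
      1 ≤ grot n (n + 1 - a) t ∧ grot n (n + 1 - a) t ≤ n :=
    fun t h1 h2 => grot_mem hn0 h1 h2
  have hpos1 : ∀ s, 1 ≤ s → s ≤ n → (s + n - 1) % n = s - 1 := by
    intro s h1 h2
    rw [show s + n - 1 = (s - 1) + n by omega, Nat.add_mod_right]
    exact Nat.mod_eq_of_lt (by omega)
  have hposg : ∀ t, 1 ≤ t → t ≤ n →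
      (grot n (n + 1 - a) t + n - 1) % n = (t + n - a) % n := by
    intro t h1 h2
    have hpg := pos_grot (r := n + 1 - a) hn0 h1 h2 haIcc.1 haIcc.2
    rw [hga] at hpg
    exact hpg
  have hgtop : grot n (n + 1 - a) ((a + (d - 1) - 1) % n + 1) = d := by
    have h1 := hposg _ htopb.1 htopb.2
    rw [hpostop, hpos1 _ (hgtb _ htopb.1 htopb.2).1 (hgtb _ htopb.1 htopb.2).2] at h1
    have := hgtb _ htopb.1 htopb.2
    omega
  have hgw : grot n (n + 1 - a) w₀ = (w₀ + n - a) % n + 1 := by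
    have h1 := hposg _ hw₀b.1 hw₀b.2
    rw [hpos1 _ (hgtb _ hw₀b.1 hw₀b.2).1 (hgtb _ hw₀b.1 hw₀b.2).2] at h1
    have := hgtb _ hw₀b.1 hw₀b.2
    omega
  have hPmem : ({1, (w₀ + n - a) % n + 1, d} : Finset ℕ) ∈
      𝒞.image (fun I => I.image (grot n (n + 1 - a))) := by
    have hmm := Finset.mem_image_of_mem (fun I => I.image (grot n (n + 1 - a)))
      hP₀mem.1
    have hmm' : P₀.image (grot n (n + 1 - a)) ∈
        𝒞.image (fun I => I.image (grot n (n + 1 - a))) := hmm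
    have himg : P₀.image (grot n (n + 1 - a)) = {1, (w₀ + n - a) % n + 1, d} := by
      rw [hP₀eq, Finset.image_insert, Finset.image_insert, Finset.image_singleton,
        hga, hgtop, hgw]
      ext t
      simp only [Finset.mem_insert, Finset.mem_singleton]
      tauto
    rw [himg] at hmm'
    exact hmm'
  exact frame_false hGrot hn hd5 hdn (by omega) (by omega) hPmem

end Main

end AB
namespace AB

theorem part2 {n : ℕ} (hn : 5 ≤ n) {𝒞 : Finset (Finset ℕ)} (h𝒞 : MaximalWS n 3 𝒞)
    {I : Finset ℕ} (hI : I ∈ 𝒞) (hd : cycDiameter n I = 4) :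
    ∃ g : ℕ → ℕ, DihedralMap n g ∧ I.image g = ({1, n - 2, n - 1} : Finset ℕ) := by
  classical
  have hn0 : 0 < n := by omega
  obtain ⟨hIcc, h3⟩ := h𝒞.1 I hI
  obtain ⟨a, haIcc, hsub⟩ := exists_cover (n := n) hn0 hIcc
  rw [Finset.mem_Icc] at haIcc
  rw [hd] at hsub
  have haI : a ∈ I := by
    by_contra hna
    have hsh := shrink_bot hn0 haIcc.1 haIcc.2 (by omega) (by omega) hIcc hsub hna
    have hle : cycDiameter n I ≤ 4 - 1 :=
      Nat.sInf_le ⟨a % n + 1, Finset.mem_Icc.mpr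
        ⟨by omega, by have := Nat.mod_lt a hn0; omega⟩, hsh⟩
    omega
  have htopP : (a + 2) % n + 1 ∈ I := by
    by_contra hna
    have hna' : (a + (4 - 1) - 1) % n + 1 ∉ I := by
      rw [show a + (4 - 1) - 1 = a + 2 from by omega]
      exact hna
    have hsh := shrink_top hn0 haIcc.1 haIcc.2 (by omega) (by omega) hIcc hsub hna'
    have hle : cycDiameter n I ≤ 4 - 1 :=
      Nat.sInf_le ⟨a, Finset.mem_Icc.mpr ⟨haIcc.1, haIcc.2⟩, hsh⟩
    omega
  have htopb : 1 ≤ (a + 2) % n + 1 ∧ (a + 2) % n + 1 ≤ n := by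
    have := Nat.mod_lt (a + 2) hn0
    omega
  have hpostop : ((a + 2) % n + 1 + n - a) % n = 3 := by
    have := pos_formula (n := n) (a := a) (p := 3) hn0 haIcc.1 haIcc.2 (by omega)
    rw [show a + 3 - 1 = a + 2 from by omega] at this
    exact this
  have hatop : a ≠ (a + 2) % n + 1 := by
    intro h
    rw [← h, show a + n - a = n from by omega, Nat.mod_self] at hpostop
    omega
  obtain ⟨w, hw1, hw2, hIeq⟩ := eq_tripleton h3 haI htopP hatop
  have hwI : w ∈ I := by rw [hIeq]; simp
  obtain ⟨r, hr4, hw_eq⟩ := Finset.mem_image.mp (hsub hwI)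
  rw [Finset.mem_range] at hr4
  have hr0 : r ≠ 0 := by
    intro h
    apply hw1
    rw [← hw_eq, h, show a + 0 - 1 = a - 1 from by omega,
      Nat.mod_eq_of_lt (by omega)]
    omega
  have hr3 : r ≠ 3 := by
    intro h
    apply hw2
    rw [← hw_eq, h, show a + 3 - 1 = a + 2 from by omega]
  rcases (by omega : r = 1 ∨ r = 2) with hr | hr
  · -- w is at position 1 : use a rotation
    subst hr
    set r₀ := (2 * n - 2 - a) % n with hr₀
    have hlt : r₀ < n := Nat.mod_lt _ hn0
    set g : ℕ → ℕ := fun t => (t - 1 + r₀) % n + 1 with hg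
    refine ⟨g, ⟨r₀, hlt, Or.inl (fun t => by simp only [hg])⟩, ?_⟩
    have v1 : g a = n - 2 := by
      simp only [hg]
      rw [Nat.add_mod_mod, show a - 1 + (2 * n - 2 - a) = (n - 3) + n from by omega,
        Nat.add_mod_right, Nat.mod_eq_of_lt (by omega)]
      omega
    have v2 : g ((a + 2) % n + 1) = 1 := by
      simp only [hg]
      rw [show (a + 2) % n + 1 - 1 = (a + 2) % n from by omega, Nat.add_mod_mod,
        Nat.mod_add_mod, show a + 2 + (2 * n - 2 - a) = 2 * n from by omega,
        Nat.mul_mod_left]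
    have v3 : g w = n - 1 := by
      have hwv : w = a % n + 1 := by
        rw [← hw_eq, show a + 1 - 1 = a from by omega]
      simp only [hg]
      rw [hwv, show a % n + 1 - 1 = a % n from by omega, Nat.add_mod_mod,
        Nat.mod_add_mod, show a + (2 * n - 2 - a) = (n - 2) + n from by omega,
        Nat.add_mod_right, Nat.mod_eq_of_lt (by omega)]
      omega
    rw [hIeq, Finset.image_insert, Finset.image_insert, Finset.image_singleton,
      v1, v2, v3]
    ext t
    simp only [Finset.mem_insert, Finset.mem_singleton]
    tauto
  · -- w is at position 2 : use a reflection
    subst hr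
    set r₀ := a % n with hr₀
    have hlt : r₀ < n := Nat.mod_lt _ hn0
    set g : ℕ → ℕ := fun t => (n - t + r₀) % n + 1 with hg
    refine ⟨g, ⟨r₀, hlt, Or.inr (fun t => by simp only [hg])⟩, ?_⟩
    have ea : a % n = if a < n then a else a - n := mod_reduce hn0 (by omega)
    have v1 : g a = 1 := by
      simp only [hg, hr₀]
      rw [ea]
      split_ifs with h
      · rw [show n - a + a = n from by omega, Nat.mod_self]
      · rw [show n - a + (a - n) = 0 from by omega, Nat.zero_mod]
    have v2 : g ((a + 2) % n + 1) = n - 2 := by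
      simp only [hg, hr₀]
      rw [mod_reduce (X := a + 2) hn0 (by omega), ea]
      split_ifs <;>
        (rw [mod_reduce hn0 (by omega)]; split_ifs <;> omega)
    have v3 : g w = n - 1 := by
      have hwv : w = (a + 1) % n + 1 := by
        rw [← hw_eq, show a + 2 - 1 = a + 1 from by omega]
      simp only [hg, hr₀]
      rw [hwv, mod_reduce (X := a + 1) hn0 (by omega), ea]
      split_ifs <;>
        (rw [mod_reduce hn0 (by omega)]; split_ifs <;> omega)
    rw [hIeq, Finset.image_insert, Finset.image_insert, Finset.image_singleton,
      v1, v2, v3]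

end AB

theorem exists_almost_boundary (n : ℕ) (hn : 5 ≤ n) (𝒞 : Finset (Finset ℕ))
    (h𝒞 : MaximalWS n 3 𝒞) :
    (∃ I ∈ 𝒞, cycDiameter n I = 4) ∧
    (∃ g : ℕ → ℕ, DihedralMap n g ∧
      ∃ I ∈ 𝒞, I.image g = ({1, n - 2, n - 1} : Finset ℕ)) := by
  have h1 := AB.part1 hn h𝒞
  refine ⟨h1, ?_⟩
  obtain ⟨I, hI, hd⟩ := h1
  obtain ⟨g, hg, himg⟩ := AB.part2 hn h𝒞 hI hd
  exact ⟨g, hg, I, hI, himg⟩
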